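/- arXiv:1509.01887 — 10 statements merged into one kernel-verified Lean document; each statement's English description precedes it below -/
import Mathlib

section
/- Let u, v be positive real numbers with u/v irrational, satisfying u+v = α and 1/u+1/v = β for positive integers α, β. Then for every positive integer t, the number of lattice points (x,y) ∈ ℤ_{≥0}² with ux + vy ≤ t equals (t²β + tαβ + zβ(α−z) + 2ασ(t))/(2α), where z = t mod α and σ(t) = 1 if α divides t and 0 otherwise. -/
/-- Lattice point count of the dilate of the triangle with vertices
`(0,0), (1/u,0), (0,1/v)`: nonnegative integer solutions of `u*x + v*y ≤ t`. -/
noncomputable def ehrhart (u v : ℝ) (t : ℕ) : ℕ :=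
  {p : ℕ × ℕ | u * p.1 + v * p.2 ≤ t}.ncard

lemma tri_finite {u v : ℝ} (hu : 0 < u) (hv : 0 < v) (t : ℕ) :
    {p : ℕ × ℕ | u * p.1 + v * p.2 ≤ t}.Finite := by
  apply Set.Finite.subset ((Set.finite_Iic (⌊(t:ℝ)/u⌋₊)).prod (Set.finite_Iic (⌊(t:ℝ)/v⌋₊)))
  rintro ⟨x, y⟩ h
  simp only [Set.mem_setOf_eq] at h
  have hx : (x:ℝ) ≤ (t:ℝ)/u := by
    rw [le_div_iff₀ hu]
    nlinarith [mul_nonneg hv.le ((Nat.cast_nonneg y : (0:ℝ) ≤ (y:ℝ)))]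
  have hy : (y:ℝ) ≤ (t:ℝ)/v := by
    rw [le_div_iff₀ hv]
    nlinarith [mul_nonneg hu.le ((Nat.cast_nonneg x : (0:ℝ) ≤ (x:ℝ)))]
  exact ⟨Set.mem_Iic.2 (Nat.le_floor hx), Set.mem_Iic.2 (Nat.le_floor hy)⟩

lemma u_irr {u v : ℝ} {α : ℕ} (hv : 0 < v) (hirr : Irrational (u / v))
    (hsum : u + v = α) : Irrational u := by
  rintro ⟨q, hq⟩
  refine hirr ⟨q / ((α:ℚ) - q), ?_⟩
  have hv' : v = (α:ℝ) - u := by linarith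
  push_cast
  rw [hq, hv']

lemma ehrhart_zero {u v : ℝ} (hu : 0 < u) (hv : 0 < v) : ehrhart u v 0 = 1 := by
  have : {p : ℕ × ℕ | u * p.1 + v * p.2 ≤ (0:ℕ)} = {((0:ℕ), (0:ℕ))} := by
    ext ⟨x, y⟩
    simp only [Set.mem_setOf_eq, Set.mem_singleton_iff, Prod.mk.injEq, Nat.cast_zero]
    constructor
    · intro h
      have hx : (x:ℝ) = 0 := by
        nlinarith [mul_nonneg hu.le ((Nat.cast_nonneg x : (0:ℝ) ≤ (x:ℝ))),
          mul_nonneg hv.le ((Nat.cast_nonneg y : (0:ℝ) ≤ (y:ℝ)))]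
      have hy : (y:ℝ) = 0 := by
        nlinarith [mul_nonneg hu.le ((Nat.cast_nonneg x : (0:ℝ) ≤ (x:ℝ))),
          mul_nonneg hv.le ((Nat.cast_nonneg y : (0:ℝ) ≤ (y:ℝ)))]
      exact ⟨by exact_mod_cast hx, by exact_mod_cast hy⟩
    · rintro ⟨rfl, rfl⟩
      simp
  rw [ehrhart, this, Set.ncard_singleton]

lemma floor_sum {u v : ℝ} {β : ℕ} (hu : 0 < u) (hv : 0 < v) (hiu : Irrational u)
    (hinv : 1 / u + 1 / v = β) (t : ℕ) (ht : 0 < t) :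
    ⌊(t:ℝ)/u⌋₊ + ⌊(t:ℝ)/v⌋₊ + 1 = t * β := by
  have ht' : (0:ℝ) < t := by exact_mod_cast ht
  have htu : Irrational ((t:ℝ)/u) := by
    rintro ⟨q, hq⟩
    refine hiu ⟨(t:ℚ) / q, ?_⟩
    have hq0 : (q:ℝ) ≠ 0 := by
      rw [hq]; positivity
    push_cast
    rw [hq]
    field_simp
  have hsum' : (t:ℝ)/u + (t:ℝ)/v = t * β := by
    have := congrArg (fun x => (t:ℝ) * x) hinv
    simpa [mul_add, mul_one_div, div_eq_mul_inv] using this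
  set a := ⌊(t:ℝ)/u⌋₊ with ha
  set b := ⌊(t:ℝ)/v⌋₊ with hb
  have h1 : (a:ℝ) < (t:ℝ)/u :=
    lt_of_le_of_ne (Nat.floor_le (by positivity)) (fun h => htu.ne_nat a h.symm)
  have h2 : (b:ℝ) < (t:ℝ)/v := by
    refine lt_of_le_of_ne (Nat.floor_le (by positivity)) (fun h => ?_)
    refine htu ⟨((t*β : ℕ) : ℚ) - (b:ℕ), ?_⟩
    push_cast
    rw [← hsum', ← h]
    ring
  have h3 : (t:ℝ)/u < a + 1 := Nat.lt_floor_add_one _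
  have h4 : (t:ℝ)/v < b + 1 := Nat.lt_floor_add_one _
  have hlt : ((a + b : ℕ) : ℝ) < ((t * β : ℕ) : ℝ) := by push_cast; linarith
  have hlt2 : ((t * β : ℕ) : ℝ) < ((a + b + 2 : ℕ) : ℝ) := by push_cast; linarith
  have k1 := Nat.cast_lt (α := ℝ) |>.1 hlt
  have k2 := Nat.cast_lt (α := ℝ) |>.1 hlt2
  omega

lemma ehrhart_step {u v : ℝ} {β : ℕ} (hu : 0 < u) (hv : 0 < v) (hiu : Irrational u)
    (hinv : 1 / u + 1 / v = β) (t : ℕ) (ht : 0 < t) :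
    ehrhart u v t = t * β +
      {p : ℕ × ℕ | u * p.1 + v * p.2 ≤ t ∧ 1 ≤ p.1 ∧ 1 ≤ p.2}.ncard := by
  classical
  set S : Set (ℕ × ℕ) := {p : ℕ × ℕ | u * p.1 + v * p.2 ≤ t} with hS
  have hSfin : S.Finite := tri_finite hu hv t
  set a := ⌊(t:ℝ)/u⌋₊ with ha
  set b := ⌊(t:ℝ)/v⌋₊ with hb
  have split1 : (S ∩ {p | p.1 = 0}).ncard + (S \ {p | p.1 = 0}).ncard = S.ncard :=
    Set.ncard_inter_add_ncard_diff_eq_ncard S _ hSfin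
  have split2 : ((S \ {p | p.1 = 0}) ∩ {p | p.2 = 0}).ncard
      + ((S \ {p | p.1 = 0}) \ {p | p.2 = 0}).ncard = (S \ {p | p.1 = 0}).ncard :=
    Set.ncard_inter_add_ncard_diff_eq_ncard _ _ (hSfin.diff)
  have hc1 : (S ∩ {p | p.1 = 0}).ncard = b + 1 := by
    have he : S ∩ {p | p.1 = 0} = (fun y => ((0:ℕ), y)) '' Set.Iic b := by
      ext ⟨x, y⟩
      simp only [hS, Set.mem_inter_iff, Set.mem_setOf_eq, Set.mem_image, Set.mem_Iic]
      constructor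
      · rintro ⟨h, hx0⟩
        subst hx0
        refine ⟨y, ?_, rfl⟩
        rw [hb]
        apply Nat.le_floor
        rw [le_div_iff₀ hv]
        simp only [Nat.cast_zero, mul_zero, zero_add] at h
        simpa [mul_comm] using h
      · rintro ⟨y', hy', h⟩
        rw [Prod.mk.injEq] at h
        obtain ⟨rfl, rfl⟩ := h
        refine ⟨?_, rfl⟩
        have hle : (y':ℝ) ≤ (t:ℝ)/v := by
          refine le_trans (Nat.cast_le.2 hy') ?_
          exact Nat.floor_le (by positivity)
        rw [le_div_iff₀ hv] at hle
        simp only [Nat.cast_zero, mul_zero, zero_add]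
        simpa [mul_comm] using hle
    rw [he, Set.ncard_image_of_injective _ (fun y₁ y₂ h => by
      simpa using h), ← Finset.coe_Iic, Set.ncard_coe_finset, Nat.card_Iic]
  have hc2 : ((S \ {p | p.1 = 0}) ∩ {p | p.2 = 0}).ncard = a := by
    have he : (S \ {p | p.1 = 0}) ∩ {p | p.2 = 0} = (fun x => (x, (0:ℕ))) '' Set.Icc 1 a := by
      ext ⟨x, y⟩
      simp only [hS, Set.mem_inter_iff, Set.mem_diff, Set.mem_setOf_eq, Set.mem_image,
        Set.mem_Icc]
      constructor
      · rintro ⟨⟨h, hx⟩, hy0⟩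
        subst hy0
        refine ⟨x, ⟨Nat.one_le_iff_ne_zero.2 hx, ?_⟩, rfl⟩
        rw [ha]
        apply Nat.le_floor
        rw [le_div_iff₀ hu]
        simp only [Nat.cast_zero, mul_zero, add_zero] at h
        simpa [mul_comm] using h
      · rintro ⟨x', ⟨hx1, hx2⟩, h⟩
        rw [Prod.mk.injEq] at h
        obtain ⟨rfl, rfl⟩ := h
        refine ⟨⟨?_, Nat.one_le_iff_ne_zero.1 hx1⟩, rfl⟩
        have hle : (x':ℝ) ≤ (t:ℝ)/u := by
          refine le_trans (Nat.cast_le.2 hx2) ?_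
          exact Nat.floor_le (by positivity)
        rw [le_div_iff₀ hu] at hle
        simp only [Nat.cast_zero, mul_zero, add_zero]
        simpa [mul_comm] using hle
    rw [he, Set.ncard_image_of_injective _ (fun x₁ x₂ h => by
      simpa using h), ← Finset.coe_Icc, Set.ncard_coe_finset, Nat.card_Icc]
    omega
  have hc3 : (S \ {p | p.1 = 0}) \ {p | p.2 = 0}
      = {p : ℕ × ℕ | u * p.1 + v * p.2 ≤ t ∧ 1 ≤ p.1 ∧ 1 ≤ p.2} := by
    ext ⟨x, y⟩
    simp only [hS, Set.mem_diff, Set.mem_setOf_eq, Nat.one_le_iff_ne_zero]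
    tauto
  have hfs := floor_sum hu hv hiu hinv t ht
  rw [ehrhart, ← split1, ← split2, hc1, hc2, hc3]
  omega

lemma inner_empty {u v : ℝ} {α : ℕ} (hu : 0 < u) (hv : 0 < v)
    (hsum : u + v = α) (t : ℕ) (ht : t < α) :
    {p : ℕ × ℕ | u * p.1 + v * p.2 ≤ t ∧ 1 ≤ p.1 ∧ 1 ≤ p.2} = ∅ := by
  ext ⟨x, y⟩
  simp only [Set.mem_setOf_eq, Set.mem_empty_iff_false, iff_false, not_and]
  intro h hx hy
  have hx' : (1:ℝ) ≤ (x:ℝ) := by exact_mod_cast hx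
  have hy' : (1:ℝ) ≤ (y:ℝ) := by exact_mod_cast hy
  have ht' : (t:ℝ) < (α:ℝ) := by exact_mod_cast ht
  nlinarith

lemma inner_card {u v : ℝ} {α : ℕ} (hu : 0 < u) (hv : 0 < v)
    (hsum : u + v = α) (t : ℕ) (ht : α ≤ t) :
    {p : ℕ × ℕ | u * p.1 + v * p.2 ≤ t ∧ 1 ≤ p.1 ∧ 1 ≤ p.2}.ncard
      = ehrhart u v (t - α) := by
  have hcast : ((t - α : ℕ) : ℝ) = (t:ℝ) - (α:ℝ) := by
    push_cast [Nat.cast_sub ht]; ring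
  have he : {p : ℕ × ℕ | u * p.1 + v * p.2 ≤ t ∧ 1 ≤ p.1 ∧ 1 ≤ p.2}
      = (fun p : ℕ × ℕ => (p.1 + 1, p.2 + 1)) '' {p : ℕ × ℕ | u * p.1 + v * p.2 ≤ (t - α : ℕ)} := by
    ext ⟨x, y⟩
    simp only [Set.mem_setOf_eq, Set.mem_image, Prod.mk.injEq]
    constructor
    · rintro ⟨h, hx, hy⟩
      refine ⟨(x - 1, y - 1), ?_, by omega, by omega⟩
      simp only [Set.mem_setOf_eq]
      rw [hcast]
      have hx1 : ((x - 1 : ℕ) : ℝ) = (x:ℝ) - 1 := by push_cast [Nat.cast_sub hx]; ring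
      have hy1 : ((y - 1 : ℕ) : ℝ) = (y:ℝ) - 1 := by push_cast [Nat.cast_sub hy]; ring
      rw [hx1, hy1]
      nlinarith
    · rintro ⟨⟨x', y'⟩, h, rfl, rfl⟩
      simp only [Set.mem_setOf_eq, hcast] at h
      refine ⟨?_, by omega, by omega⟩
      push_cast
      nlinarith
  rw [he, Set.ncard_image_of_injective _ (fun p q h => by
    rw [Prod.mk.injEq] at h
    exact Prod.ext (by omega) (by omega))]
  rfl

theorem stmt_0 (u v : ℝ) (hu : 0 < u) (hv : 0 < v) (hirr : Irrational (u / v))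
    (α β : ℕ) (hα : 0 < α) (hβ : 0 < β)
    (hsum : u + v = α) (hinv : 1 / u + 1 / v = β) (t : ℕ) (ht : 0 < t) :
    (ehrhart u v t : ℝ) =
      ((t : ℝ) ^ 2 * β + t * α * β + (t % α : ℕ) * β * (α - (t % α : ℕ))
        + 2 * α * (if (α : ℕ) ∣ t then 1 else 0)) / (2 * α) := by
  have hiu : Irrational u := u_irr hv hirr hsum
  have hα' : (0:ℝ) < α := by exact_mod_cast hα
  revert ht
  induction t using Nat.strong_induction_on with
  | _ t ih =>
  intro ht
  rcases lt_or_ge t α with hlt | hge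
  · rw [ehrhart_step hu hv hiu hinv t ht, inner_empty hu hv hsum t hlt, Set.ncard_empty]
    have hz : t % α = t := Nat.mod_eq_of_lt hlt
    have hdvd : ¬ α ∣ t := fun h => absurd (Nat.le_of_dvd ht h) (not_le.2 hlt)
    rw [hz, if_neg hdvd]
    rw [eq_div_iff (by positivity)]
    push_cast
    ring
  · rw [ehrhart_step hu hv hiu hinv t ht, inner_card hu hv hsum t hge]
    rcases eq_or_lt_of_le hge with heq | hgt
    · subst heq
      rw [Nat.sub_self, ehrhart_zero hu hv]
      rw [Nat.mod_self, if_pos dvd_rfl]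
      rw [eq_div_iff (by positivity)]
      push_cast
      ring
    · have ht2 : 0 < t - α := by omega
      have hlt2 : t - α < t := by omega
      have hih := ih (t - α) hlt2 ht2
      have hmod : (t - α) % α = t % α := (Nat.mod_eq_sub_mod hge).symm
      have hdvd : (if α ∣ t - α then (1:ℝ) else 0) = (if α ∣ t then (1:ℝ) else 0) := by
        have hiff : α ∣ (t - α) ↔ α ∣ t := by
          constructor
          · intro h
            have h2 : t = (t - α) + α := by omega
            rw [h2]; exact Dvd.dvd.add h dvd_rfl
          · intro h; exact Nat.dvd_sub h dvd_rfl
        simp [hiff]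
      rw [hmod, hdvd] at hih
      have hcast : ((t - α : ℕ) : ℝ) = (t:ℝ) - (α:ℝ) := by
        push_cast [Nat.cast_sub hge]; ring
      push_cast [hih, hcast]
      rw [eq_div_iff (by positivity : (2:ℝ) * ↑α ≠ 0)]
      rw [add_mul, div_mul_cancel₀ _ (by positivity : (2:ℝ) * ↑α ≠ 0)]
      ring
end

section
/- Let u, v be positive real numbers with u/v irrational, satisfying u+v = α and 1/u+1/v = β for positive integers α, β. Then the Ehrhart function t ↦ #{(x,y) ∈ ℤ_{≥0}² : ux+vy ≤ t} is a quasipolynomial in the positive integer t with period dividing α. -/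
open Set Polynomial

lemma ehrhart_set_finite (u v : ℝ) (hu : 0 < u) (hv : 0 < v) (t : ℕ) :
    {p : ℕ × ℕ | u * p.1 + v * p.2 ≤ t}.Finite := by
  apply Set.Finite.subset
    ((Set.finite_Iic (⌈(t : ℝ)/u⌉₊)).prod (Set.finite_Iic (⌈(t : ℝ)/v⌉₊)))
  rintro ⟨x, y⟩ h
  simp only [Set.mem_setOf_eq] at h
  have hx0 : (0:ℝ) ≤ (x:ℝ) := Nat.cast_nonneg x
  have hy0 : (0:ℝ) ≤ (y:ℝ) := Nat.cast_nonneg y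
  constructor
  · have hx : (x:ℝ) ≤ (t:ℝ)/u := by
      rw [le_div_iff₀ hu]
      nlinarith [mul_nonneg hv.le hy0]
    have := hx.trans (Nat.le_ceil ((t:ℝ)/u))
    exact Set.mem_Iic.mpr (by exact_mod_cast this)
  · have hy : (y:ℝ) ≤ (t:ℝ)/v := by
      rw [le_div_iff₀ hv]
      nlinarith [mul_nonneg hu.le hx0]
    have := hy.trans (Nat.le_ceil ((t:ℝ)/v))
    exact Set.mem_Iic.mpr (by exact_mod_cast this)

lemma ncard_Iic_nat (n : ℕ) : (Set.Iic n).ncard = n + 1 := by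
  rw [← Finset.coe_Iic, Set.ncard_coe_finset, Nat.card_Iic]

lemma ncard_Icc_one_nat (n : ℕ) : (Set.Icc 1 n).ncard = n := by
  rw [← Finset.coe_Icc, Set.ncard_coe_finset, Nat.card_Icc]
  omega

lemma floor_lt_of_irrational (w : ℝ) (hw : 0 < w) (hiw : Irrational w) (t : ℕ) (ht : 0 < t) :
    (⌊(t:ℝ)/w⌋₊ : ℝ) < (t:ℝ)/w := by
  have htpos : (0:ℝ) < t := by exact_mod_cast ht
  have hdpos : (0:ℝ) < (t:ℝ)/w := div_pos htpos hw
  refine lt_of_le_of_ne (Nat.floor_le hdpos.le) ?_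
  intro h
  set a := ⌊(t:ℝ)/w⌋₊ with ha
  have ha0 : (a:ℝ) ≠ 0 := by
    intro h0
    rw [h0] at h
    exact absurd h.symm (ne_of_gt hdpos)
  have hw' : w = (t:ℝ)/(a:ℝ) := by
    field_simp at h ⊢
    linarith [h]
  exact hiw ⟨(t:ℚ)/(a:ℚ), by rw [hw']; push_cast; ring⟩

lemma ehrhart_rec (u v : ℝ) (hu : 0 < u) (hv : 0 < v)
    (hiu : Irrational u) (hiv : Irrational v)
    (α β : ℕ) (hα : 0 < α) (hsum : u + v = α) (hinv : 1 / u + 1 / v = β)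
    (t : ℕ) (ht : α ≤ t) :
    ehrhart u v t = ehrhart u v (t - α) + β * t := by
  have htpos : 0 < t := lt_of_lt_of_le hα ht
  set a := ⌊(t:ℝ)/u⌋₊ with ha
  set b := ⌊(t:ℝ)/v⌋₊ with hb
  -- key arithmetic fact
  have hsumr : (t:ℝ)/u + (t:ℝ)/v = (β:ℝ) * t := by
    have : (t:ℝ)/u + (t:ℝ)/v = (t:ℝ) * (1/u + 1/v) := by ring
    rw [this, hinv]; ring
  have h1 : (a:ℝ) < (t:ℝ)/u := floor_lt_of_irrational u hu hiu t htpos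
  have h2 : (b:ℝ) < (t:ℝ)/v := floor_lt_of_irrational v hv hiv t htpos
  have h3 : (t:ℝ)/u < (a:ℝ) + 1 := Nat.lt_floor_add_one _
  have h4 : (t:ℝ)/v < (b:ℝ) + 1 := Nat.lt_floor_add_one _
  have hab : a + b + 1 = β * t := by
    have hl : a + b < β * t := by
      have : ((a:ℕ) + b : ℝ) < ((β * t : ℕ) : ℝ) := by push_cast; linarith
      exact_mod_cast this
    have hr : β * t < a + b + 2 := by
      have : ((β * t : ℕ) : ℝ) < ((a + b + 2 : ℕ) : ℝ) := by push_cast; linarith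
      exact_mod_cast this
    omega
  -- set decomposition
  set S : ℕ → Set (ℕ × ℕ) := fun n => {p : ℕ × ℕ | u * p.1 + v * p.2 ≤ n} with hS
  have hfin : ∀ n, (S n).Finite := fun n => ehrhart_set_finite u v hu hv n
  set f : ℕ × ℕ → ℕ × ℕ := fun p => (p.1 + 1, p.2 + 1) with hf
  have hfinj : Function.Injective f := by
    intro p q h
    simp only [hf, Prod.mk.injEq] at h
    exact Prod.ext (by omega) (by omega)
  set A : Set (ℕ × ℕ) := (fun y => ((0:ℕ), y)) '' Set.Iic b with hA
  set B : Set (ℕ × ℕ) := (fun x => (x, (0:ℕ))) '' Set.Icc 1 a with hB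
  have hcast : ((t - α : ℕ) : ℝ) = (t:ℝ) - (α:ℝ) := by
    rw [Nat.cast_sub ht]
  have hsplit : S t = (f '' S (t - α)) ∪ A ∪ B := by
    ext ⟨x, y⟩
    simp only [hS, Set.mem_setOf_eq, Set.mem_union, hA, hB, Set.mem_image, hf,
      Set.mem_Iic, Set.mem_Icc, Prod.mk.injEq]
    constructor
    · intro h
      rcases Nat.eq_zero_or_pos x with hx | hx
      · left; right
        refine ⟨y, ?_, hx.symm, rfl⟩
        have hvy : v * y ≤ t := by
          rw [hx] at h; push_cast at h; linarith
        have : (y:ℝ) ≤ (t:ℝ)/v := by rw [le_div_iff₀ hv]; linarith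
        exact Nat.le_floor this
      · rcases Nat.eq_zero_or_pos y with hy | hy
        · right
          refine ⟨x, ⟨hx, ?_⟩, rfl, hy.symm⟩
          have hux : u * x ≤ t := by
            rw [hy] at h; push_cast at h; linarith
          have : (x:ℝ) ≤ (t:ℝ)/u := by rw [le_div_iff₀ hu]; linarith
          exact Nat.le_floor this
        · left; left
          refine ⟨(x - 1, y - 1), ?_, ?_⟩
          · show u * ((x - 1 : ℕ):ℝ) + v * ((y - 1 : ℕ):ℝ) ≤ ((t - α : ℕ):ℝ)
            rw [hcast, Nat.cast_sub hx, Nat.cast_sub hy]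
            push_cast
            nlinarith [h, hsum]
          · simp only [Prod.mk.injEq]
            constructor <;> omega
    · rintro ((⟨⟨x', y'⟩, hp, hpe⟩ | ⟨y', hy', h0, hye⟩) | ⟨x', ⟨_, hx'⟩, hxe, h0⟩)
      · simp only [Prod.mk.injEq] at hpe
        obtain ⟨hx1, hy1⟩ := hpe
        simp only [Set.mem_setOf_eq] at hp
        rw [← hx1, ← hy1]
        push_cast
        rw [hcast] at hp
        nlinarith [hp, hsum]
      · rw [← h0, ← hye]
        push_cast
        have hyb : (y':ℝ) ≤ (t:ℝ)/v := le_trans (by exact_mod_cast hy') (Nat.floor_le (by positivity))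
        rw [le_div_iff₀ hv] at hyb
        nlinarith
      · rw [← hxe, ← h0]
        push_cast
        have hxa : (x':ℝ) ≤ (t:ℝ)/u := le_trans (by exact_mod_cast hx') (Nat.floor_le (by positivity))
        rw [le_div_iff₀ hu] at hxa
        nlinarith
  -- cardinalities
  have hfinC : (f '' S (t - α)).Finite := (hfin _).image f
  have hfinA : A.Finite := (Set.finite_Iic b).image _
  have hfinB : B.Finite := (Set.finite_Icc 1 a).image _
  have hdisj1 : Disjoint (f '' S (t - α)) A := by
    rw [Set.disjoint_left]
    rintro p ⟨⟨x', y'⟩, _, hpe⟩ ⟨y'', _, hpe'⟩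
    rw [← hpe'] at hpe
    simp only [hf, Prod.mk.injEq] at hpe
    omega
  have hdisj2 : Disjoint (f '' S (t - α) ∪ A) B := by
    rw [Set.disjoint_left]
    rintro p (⟨⟨x', y'⟩, _, hpe⟩ | ⟨y'', _, hpe⟩) ⟨x'', ⟨hx'', _⟩, hpe'⟩ <;>
      rw [← hpe'] at hpe <;> simp only [hf, Prod.mk.injEq] at hpe <;> omega
  have hcardA : A.ncard = b + 1 := by
    rw [hA, Set.ncard_image_of_injective _ (fun y₁ y₂ h => by
      simpa using congrArg Prod.snd h), _root_.ncard_Iic_nat]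
  have hcardB : B.ncard = a := by
    rw [hB, Set.ncard_image_of_injective _ (fun x₁ x₂ h => by
      simpa using congrArg Prod.fst h), ncard_Icc_one_nat]
  have hcardC : (f '' S (t - α)).ncard = ehrhart u v (t - α) :=
    Set.ncard_image_of_injective _ hfinj
  have : ehrhart u v t = (f '' S (t - α)).ncard + A.ncard + B.ncard := by
    show (S t).ncard = _
    rw [hsplit, Set.ncard_union_eq hdisj2 (hfinC.union hfinA) hfinB,
      Set.ncard_union_eq hdisj1 hfinC hfinA]
  rw [this, hcardA, hcardB, hcardC]
  omega

lemma ehrhart_formula (u v : ℝ) (hu : 0 < u) (hv : 0 < v)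
    (hiu : Irrational u) (hiv : Irrational v)
    (α β : ℕ) (hα : 0 < α) (hsum : u + v = α) (hinv : 1 / u + 1 / v = β)
    (q r : ℕ) :
    (ehrhart u v (r + q * α) : ℚ) =
      (ehrhart u v r : ℚ) + β * q * r + β * α * q * (q + 1) / 2 := by
  induction q with
  | zero => simp
  | succ n ih =>
    have hle : α ≤ r + (n + 1) * α := by nlinarith
    have hrec := ehrhart_rec u v hu hv hiu hiv α β hα hsum hinv (r + (n + 1) * α) hle
    have hsub : r + (n + 1) * α - α = r + n * α := by
      have h' : (n + 1) * α = n * α + α := by ring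
      omega
    rw [hsub] at hrec
    rw [hrec]
    push_cast
    rw [ih]
    ring

/-- The Ehrhart function of an admissible irrational triangle is a
quasipolynomial with period dividing `α`. -/
theorem stmt_1 (u v : ℝ) (hu : 0 < u) (hv : 0 < v) (hirr : Irrational (u / v))
    (α β : ℕ) (hα : 0 < α) (hβ : 0 < β)
    (hsum : u + v = α) (hinv : 1 / u + 1 / v = β) :
    ∃ p : ℕ → Polynomial ℚ,
      ∀ t : ℕ, 0 < t → (ehrhart u v t : ℚ) = (p (t % α)).eval (t : ℚ) := by
  have hv0 : v ≠ 0 := ne_of_gt hv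
  have hu0 : u ≠ 0 := ne_of_gt hu
  have hiu : Irrational u := by
    by_contra h
    obtain ⟨s, hs⟩ := not_not.mp h
    refine hirr ⟨s / ((α:ℚ) - s), ?_⟩
    push_cast
    rw [hs]
    have hveq : v = (α:ℝ) - u := by linarith
    rw [← hveq]
  have hiv : Irrational v := by
    by_contra h
    obtain ⟨s, hs⟩ := not_not.mp h
    refine hirr ⟨((α:ℚ) - s) / s, ?_⟩
    push_cast
    rw [hs]
    have hueq : u = (α:ℝ) - v := by linarith
    rw [← hueq]
  refine ⟨fun r => C ((ehrhart u v r : ℚ)) + C ((β:ℚ) * r / α) * (X - C (r:ℚ)) +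
    C ((β:ℚ) / (2 * α)) * ((X - C (r:ℚ)) * (X - C (r:ℚ) + C (α:ℚ))), fun t ht => ?_⟩
  have hα0 : (α:ℚ) ≠ 0 := by exact_mod_cast hα.ne'
  set r := t % α with hr
  set q := t / α with hq
  have hrq : r + q * α = t := by
    rw [hr, hq, mul_comm]
    exact Nat.mod_add_div t α
  rw [← hrq]
  rw [ehrhart_formula u v hu hv hiu hiv α β hα hsum hinv q r]
  simp only [eval_add, eval_mul, eval_sub, eval_C, eval_X]
  push_cast
  field_simp
  ring
end

section
/- Let u, v be positive reals with u/v irrational, u+v = α ∈ ℤ_{>0} and 1/u+1/v = β ∈ ℤ_{>0}. If the Ehrhart function of T_{u,v} is a polynomial in t (pseudo-integral), then either α = 1, or (α,β) = (3,3), or (α,β) = (2,4). -/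
set_option maxHeartbeats 2000000
open Polynomial

lemma ncard_Iic_image {f : ℕ → ℕ × ℕ} (hf : Function.Injective f) (n : ℕ) :
    ((f '' Set.Iic n)).ncard = n + 1 := by
  rw [Set.ncard_image_of_injective _ hf, ← Finset.coe_Iic, Set.ncard_coe_finset, Nat.card_Iic]

lemma finite_Iic_image {f : ℕ → ℕ × ℕ} (n : ℕ) : ((f '' Set.Iic n)).Finite :=
  (Set.finite_Iic n).image f

lemma one_le_cast_of_ne {y : ℕ} (hy : y ≠ 0) : (1:ℝ) ≤ y := by
  exact_mod_cast Nat.one_le_iff_ne_zero.2 hy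

lemma triangle_finite (u v : ℝ) (hu : 0 < u) (hv : 0 < v) (T : ℕ) :
    {p : ℕ × ℕ | u * p.1 + v * p.2 ≤ T}.Finite := by
  apply Set.Finite.subset ((Set.finite_Iic ⌊(T:ℝ)/u⌋₊).prod (Set.finite_Iic ⌊(T:ℝ)/v⌋₊))
  rintro ⟨x, y⟩ h
  simp only [Set.mem_setOf_eq] at h
  have hx0 : (0:ℝ) ≤ u * x := mul_nonneg hu.le (Nat.cast_nonneg x)
  have hy0 : (0:ℝ) ≤ v * y := mul_nonneg hv.le (Nat.cast_nonneg y)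
  constructor
  · exact Nat.le_floor ((le_div_iff₀ hu).2 (by nlinarith))
  · exact Nat.le_floor ((le_div_iff₀ hv).2 (by nlinarith))

lemma ehrhart_one_row (u v : ℝ) (hu : 0 < u) (hv : 0 < v) (T n : ℕ)
    (hTv : (T:ℝ) < v) (h1 : u * n ≤ T) (h2 : (T:ℝ) < u * (n+1)) :
    ehrhart u v T = n + 1 := by
  have hset : {p : ℕ × ℕ | u * p.1 + v * p.2 ≤ T} = (fun x => (x, 0)) '' Set.Iic n := by
    ext ⟨x, y⟩
    simp only [Set.mem_setOf_eq, Set.mem_image, Set.mem_Iic, Prod.mk.injEq]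
    constructor
    · intro h
      have hy : y = 0 := by
        by_contra hy
        have h1' := one_le_cast_of_ne hy
        nlinarith [mul_nonneg hu.le (Nat.cast_nonneg x : (0:ℝ) ≤ x)]
      subst hy
      refine ⟨x, ?_, rfl, rfl⟩
      by_contra hx
      push_neg at hx
      have : ((n:ℝ) + 1) ≤ x := by exact_mod_cast hx
      simp only [Nat.cast_zero, mul_zero, add_zero] at h
      nlinarith
    · rintro ⟨z, hz, rfl, rfl⟩
      have : (z:ℝ) ≤ n := by exact_mod_cast hz
      simp only [Nat.cast_zero, mul_zero, add_zero]
      nlinarith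
  rw [ehrhart, hset, ncard_Iic_image (fun a b h => by simpa using h)]

lemma ehrhart_two_rows (u v : ℝ) (hu : 0 < u) (hv : 0 < v) (T n m : ℕ)
    (hTv : (T:ℝ) < 2 * v) (h1 : u * n ≤ T) (h2 : (T:ℝ) < u * (n+1))
    (h3 : u * m + v ≤ T) (h4 : (T:ℝ) < u * (m+1) + v) :
    ehrhart u v T = (n + 1) + (m + 1) := by
  have hset : {p : ℕ × ℕ | u * p.1 + v * p.2 ≤ T} =
      ((fun x => (x, 0)) '' Set.Iic n) ∪ ((fun x => (x, 1)) '' Set.Iic m) := by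
    ext ⟨x, y⟩
    simp only [Set.mem_setOf_eq, Set.mem_union, Set.mem_image, Set.mem_Iic, Prod.mk.injEq]
    constructor
    · intro h
      have hx0 : (0:ℝ) ≤ u * x := mul_nonneg hu.le (Nat.cast_nonneg x)
      have hy : y = 0 ∨ y = 1 := by
        by_contra hy
        push_neg at hy
        have h2' : 2 ≤ y := by omega
        have : (2:ℝ) ≤ y := by exact_mod_cast h2'
        nlinarith
      rcases hy with hy | hy <;> subst hy
      · left
        refine ⟨x, ?_, rfl, rfl⟩
        by_contra hx
        push_neg at hx
        have : ((n:ℝ) + 1) ≤ x := by exact_mod_cast hx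
        simp only [Nat.cast_zero, mul_zero, add_zero] at h
        nlinarith
      · right
        refine ⟨x, ?_, rfl, rfl⟩
        by_contra hx
        push_neg at hx
        have : ((m:ℝ) + 1) ≤ x := by exact_mod_cast hx
        simp only [Nat.cast_one, mul_one] at h
        nlinarith
    · rintro (⟨z, hz, rfl, rfl⟩ | ⟨z, hz, rfl, rfl⟩)
      · have : (z:ℝ) ≤ n := by exact_mod_cast hz
        simp only [Nat.cast_zero, mul_zero, add_zero]
        nlinarith
      · have : (z:ℝ) ≤ m := by exact_mod_cast hz
        simp only [Nat.cast_one, mul_one]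
        nlinarith
  rw [ehrhart, hset, Set.ncard_union_eq ?_ (finite_Iic_image n) (finite_Iic_image m),
    ncard_Iic_image (fun a b h => by simpa using h),
    ncard_Iic_image (fun a b h => by simpa using h)]
  rw [Set.disjoint_left]
  rintro ⟨x, y⟩ ⟨z, hz, hzz⟩ ⟨w, hw, hww⟩
  rw [Prod.ext_iff] at hzz hww
  simp at hzz hww
  omega

lemma ehrhart_shift (u v : ℝ) (hu : 0 < u) (hv : 0 < v)
    (hiu : Irrational u) (hiv : Irrational v)
    (α β : ℕ) (hsum : u + v = α) (hinv : 1/u + 1/v = β)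
    (huα : u < α) (hvα : v < α) (t : ℕ) :
    ehrhart u v (t + α) = ehrhart u v t + (t + α) * β := by
  set T := t + α with hT
  have hα : 0 < α := by
    by_contra h
    push_neg at h
    interval_cases α
    simp at huα
    linarith
  have hTα : (α : ℝ) ≤ T := by
    have : α ≤ T := by omega
    exact_mod_cast this
  have hT0 : T ≠ 0 := by omega
  have hTu : Irrational ((T:ℝ)/u) := hiu.natCast_div hT0
  have hTv : Irrational ((T:ℝ)/v) := hiv.natCast_div hT0
  set N := ⌊(T:ℝ)/u⌋₊ with hNdef
  set r := ⌊(T:ℝ)/v⌋₊ with hrdef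
  have hN1 : u * N < T := by
    have h1 : (N:ℝ) ≤ (T:ℝ)/u := Nat.floor_le (by positivity)
    have h2 : (N:ℝ) ≠ (T:ℝ)/u := fun h => hTu ⟨N, by exact_mod_cast h⟩
    have := lt_of_le_of_ne h1 h2
    calc u * N = N * u := mul_comm _ _
    _ < ((T:ℝ)/u) * u := by exact mul_lt_mul_of_pos_right this hu
    _ = T := div_mul_cancel₀ _ hu.ne'
  have hN2 : (T:ℝ) < u * (N+1) := by
    have := Nat.lt_floor_add_one ((T:ℝ)/u)
    calc (T:ℝ) = ((T:ℝ)/u) * u := (div_mul_cancel₀ _ hu.ne').symm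
    _ < ((N:ℝ)+1) * u := by exact mul_lt_mul_of_pos_right this hu
    _ = u * (N+1) := by ring
  have hr1 : v * r < T := by
    have h1 : (r:ℝ) ≤ (T:ℝ)/v := Nat.floor_le (by positivity)
    have h2 : (r:ℝ) ≠ (T:ℝ)/v := fun h => hTv ⟨r, by exact_mod_cast h⟩
    have := lt_of_le_of_ne h1 h2
    calc v * r = r * v := mul_comm _ _
    _ < ((T:ℝ)/v) * v := by exact mul_lt_mul_of_pos_right this hv
    _ = T := div_mul_cancel₀ _ hv.ne'
  have hr2 : (T:ℝ) < v * (r+1) := by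
    have := Nat.lt_floor_add_one ((T:ℝ)/v)
    calc (T:ℝ) = ((T:ℝ)/v) * v := (div_mul_cancel₀ _ hv.ne').symm
    _ < ((r:ℝ)+1) * v := by exact mul_lt_mul_of_pos_right this hv
    _ = v * (r+1) := by ring
  have hsumTβ : (T:ℝ)/u + (T:ℝ)/v = (T:ℝ) * β := by
    field_simp
    field_simp at hinv
    nlinarith [hinv]
  have hkey : N + r + 1 = T * β := by
    have hlow : (N:ℝ) + r < (T:ℝ) * β := by
      have a1 : (N:ℝ) < (T:ℝ)/u := by
        rw [lt_div_iff₀ hu]; linarith [hN1, mul_comm u (N:ℝ)]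
      have a2 : (r:ℝ) < (T:ℝ)/v := by
        rw [lt_div_iff₀ hv]; linarith [hr1, mul_comm v (r:ℝ)]
      linarith
    have hhigh : (T:ℝ) * β < (N:ℝ) + r + 2 := by
      have a1 : (T:ℝ)/u < (N:ℝ) + 1 := by
        rw [div_lt_iff₀ hu]; linarith [hN2, mul_comm u ((N:ℝ)+1)]
      have a2 : (T:ℝ)/v < (r:ℝ) + 1 := by
        rw [div_lt_iff₀ hv]; linarith [hr2, mul_comm v ((r:ℝ)+1)]
      linarith
    have l1 : N + r < T * β := by exact_mod_cast hlow
    have l2 : T * β < N + r + 2 := by exact_mod_cast hhigh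
    omega
  have hN0 : 1 ≤ N := (Nat.one_le_floor_iff _).2 ((le_div_iff₀ hu).2 (by nlinarith))
  obtain ⟨M, hM⟩ : ∃ M, N = M + 1 := ⟨N - 1, by omega⟩
  have hset : {p : ℕ × ℕ | u * p.1 + v * p.2 ≤ (T:ℕ)} =
      ((fun p : ℕ × ℕ => (p.1 + 1, p.2 + 1)) '' {p : ℕ × ℕ | u * p.1 + v * p.2 ≤ t}) ∪
      (((fun y => ((0:ℕ), y)) '' Set.Iic r) ∪ ((fun x => (x + 1, (0:ℕ))) '' Set.Iic M)) := by
    ext ⟨x, y⟩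
    simp only [Set.mem_setOf_eq, Set.mem_union, Set.mem_image, Set.mem_Iic, Prod.mk.injEq]
    constructor
    · intro h
      match x, y with
      | 0, y =>
        refine Or.inr (Or.inl ⟨y, ?_, rfl, rfl⟩)
        simp only [Nat.cast_zero, mul_zero, zero_add] at h
        exact Nat.le_floor ((le_div_iff₀ hv).2 (by linarith [mul_comm v (y:ℝ)]))
      | x + 1, 0 =>
        refine Or.inr (Or.inr ⟨x, ?_, rfl, rfl⟩)
        simp only [Nat.cast_zero, mul_zero, add_zero] at h
        have : x + 1 ≤ N := by
          apply Nat.le_floor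
          rw [le_div_iff₀ hu]
          push_cast at h ⊢
          linarith [mul_comm u ((x:ℝ)+1)]
        omega
      | x + 1, y + 1 =>
        refine Or.inl ⟨(x, y), ?_, rfl, rfl⟩
        simp only [Set.mem_setOf_eq]
        push_cast at h ⊢
        have hTc : (T:ℝ) = (t:ℝ) + α := by rw [hT]; push_cast; ring
        nlinarith [h, hsum]
    · rintro (⟨⟨p1, p2⟩, hp, hpe⟩ | ⟨z, hz, rfl, rfl⟩ | ⟨z, hz, rfl, rfl⟩)
      · simp only [Prod.mk.injEq] at hpe
        obtain ⟨h1, h2⟩ := hpe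
        subst h1; subst h2
        simp only [Set.mem_setOf_eq] at hp
        have hTc : (T:ℝ) = (t:ℝ) + α := by rw [hT]; push_cast; ring
        push_cast
        nlinarith [hp, hsum]
      · have : (z:ℝ) ≤ r := by exact_mod_cast hz
        push_cast
        nlinarith [hr1]
      · have : (z:ℝ) ≤ M := by exact_mod_cast hz
        have hzN : (z:ℝ) + 1 ≤ N := by
          have : (z:ℕ) + 1 ≤ N := by omega
          exact_mod_cast this
        push_cast
        nlinarith [hN1]
  have hinj : Function.Injective (fun p : ℕ × ℕ => (p.1 + 1, p.2 + 1)) := by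
    rintro ⟨a, b⟩ ⟨c, d⟩ h
    simp only [Prod.mk.injEq] at h
    simp [Prod.ext_iff]; omega
  have hfin := triangle_finite u v hu hv t
  have hd1 : Disjoint ((fun p : ℕ × ℕ => (p.1 + 1, p.2 + 1)) '' {p : ℕ × ℕ | u * p.1 + v * p.2 ≤ t})
      (((fun y => ((0:ℕ), y)) '' Set.Iic r) ∪ ((fun x => (x + 1, (0:ℕ))) '' Set.Iic M)) := by
    rw [Set.disjoint_left]
    rintro ⟨x, y⟩ ⟨p, hp, hpe⟩ (⟨z, hz, hze⟩ | ⟨z, hz, hze⟩) <;>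
      rw [Prod.ext_iff] at hpe hze <;> simp at hpe hze <;> omega
  have hd2 : Disjoint ((fun y => ((0:ℕ), y)) '' Set.Iic r) ((fun x => (x + 1, (0:ℕ))) '' Set.Iic M) := by
    rw [Set.disjoint_left]
    rintro ⟨x, y⟩ ⟨z, hz, hze⟩ ⟨w, hw, hwe⟩
    rw [Prod.ext_iff] at hze hwe
    simp at hze hwe
    omega
  rw [ehrhart, hset, Set.ncard_union_eq hd1 (hfin.image _)
      ((finite_Iic_image r).union (finite_Iic_image M)),
    Set.ncard_union_eq hd2 (finite_Iic_image r) (finite_Iic_image M),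
    Set.ncard_image_of_injective _ hinj,
    ncard_Iic_image (fun a b h => by simpa using h),
    ncard_Iic_image (fun a b h => by simpa using h)]
  rw [← ehrhart]
  omega

lemma poly_zero (D : ℚ[X]) (h : ∀ t : ℕ, 1 ≤ t → D.eval (t:ℚ) = 0) : D = 0 := by
  apply Polynomial.eq_zero_of_infinite_isRoot
  apply Set.Infinite.mono (s := (fun n : ℕ => (n:ℚ)) '' Set.Ici 1)
  · rintro x ⟨n, hn, rfl⟩
    exact h n hn
  · exact (Set.Ici_infinite 1).image (fun a _ b _ hab => by exact_mod_cast hab)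

lemma poly_pin (P : ℚ[X]) (A B : ℚ) (hA : 0 < A)
    (hshift : ∀ x : ℚ, P.eval (x + A) = P.eval x + B * x + A * B) :
    ∀ x : ℚ, P.eval x = B/(2*A) * x^2 + B/2 * x + P.eval 0 := by
  set Q : ℚ[X] := P - C (B/(2*A)) * X^2 - C (B/2) * X - C (P.eval 0) with hQ
  have hev : ∀ x : ℚ, Q.eval x = P.eval x - (B/(2*A)*x^2 + B/2*x + P.eval 0) := by
    intro x; simp [hQ]; ring
  have hstep : ∀ n : ℕ, Q.eval ((n:ℚ) * A) = 0 := by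
    intro n
    induction n with
    | zero => simp [hev]
    | succ n ih =>
      rw [hev] at ih ⊢
      push_cast
      have he : ((n:ℚ)+1)*A = (n:ℚ)*A + A := by ring
      rw [he, hshift ((n:ℚ)*A)]
      have hA' : A ≠ 0 := hA.ne'
      field_simp at ih ⊢
      linear_combination ih
  have hQ0 : Q = 0 := by
    apply Polynomial.eq_zero_of_infinite_isRoot
    apply Set.Infinite.mono (s := (fun n : ℕ => (n:ℚ) * A) '' Set.univ)
    · rintro x ⟨n, _, rfl⟩
      exact hstep n
    · apply Set.infinite_univ.image
      intro a _ b _ hab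
      have : (a:ℚ) = b := by
        field_simp at hab
        exact_mod_cast hab
      exact_mod_cast this
  intro x
  have := hev x
  rw [hQ0] at this
  simp at this
  linarith

lemma main_lemma (u v : ℝ) (hu : 0 < u) (hv : 0 < v) (hlt : u < v)
    (hiu : Irrational u) (hiv : Irrational v)
    (α β : ℕ) (hα : 2 ≤ α) (hβ : 1 ≤ β)
    (hsum : u + v = α) (hinv : 1 / u + 1 / v = β)
    (hpoly : ∃ P : Polynomial ℚ, ∀ t : ℕ, 0 < t →
      (ehrhart u v t : ℚ) = P.eval (t : ℚ)) :
    (α = 3 ∧ β = 3) ∨ (α = 2 ∧ β = 4) := by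
  obtain ⟨P, hP⟩ := hpoly
  have hA2 : (2:ℝ) ≤ (α:ℝ) := by exact_mod_cast hα
  have hB1 : (1:ℝ) ≤ (β:ℝ) := by exact_mod_cast hβ
  have hBpos : (0:ℝ) < β := by linarith
  have hApos : (0:ℝ) < α := by linarith
  have hveq : v = (α:ℝ) - u := by linarith
  have huv : u * v * β = α := by
    rw [div_add_div _ _ hu.ne' hv.ne', div_eq_iff (by positivity)] at hinv
    nlinarith [hinv]
  have hquad : (α:ℝ) * β * u - (β:ℝ) * u^2 = α := by nlinarith [huv]
  have huA2 : 2 * u < α := by linarith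
  have hABgt : (4:ℝ) < α * β := by
    have hne : (0:ℝ) < (u - v)^2 := by
      have h0 : u - v ≠ 0 := sub_ne_zero.2 hlt.ne
      positivity
    nlinarith [hne, mul_pos hu hv]
  have hABn : 5 ≤ α * β := by
    have h1 : (4:ℝ) < ((α * β : ℕ):ℝ) := by push_cast; linarith
    have h2 : 4 < α * β := by exact_mod_cast h1
    omega
  have hshiftN := ehrhart_shift u v hu hv hiu hiv α β hsum hinv
    (by linarith) (by linarith)
  have hD : ∀ x : ℚ, P.eval (x + (α:ℚ)) = P.eval x + (β:ℚ) * x + (α:ℚ) * (β:ℚ) := by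
    have h0 : (P.comp (X + C (α:ℚ)) - P - C (β:ℚ) * X - C ((α:ℚ)*(β:ℚ))) = 0 := by
      apply poly_zero
      intro t ht
      have h1 := hP t ht
      have h2 := hP (t + α) (by omega)
      have h3 := hshiftN t
      have h3' : ((ehrhart u v (t+α) : ℚ)) = (ehrhart u v t : ℚ) + ((t:ℚ)+(α:ℚ)) * β := by
        rw [h3]; push_cast; ring
      simp only [eval_sub, eval_comp, eval_add, eval_mul, eval_C, eval_X]
      push_cast at h2
      rw [h2, h1] at h3'
      linarith
    intro x
    have h1 := congrArg (eval x) h0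
    simp only [eval_sub, eval_comp, eval_add, eval_mul, eval_C, eval_X, eval_zero] at h1
    linarith
  have hαQpos : (0:ℚ) < (α:ℚ) := by exact_mod_cast Nat.lt_of_lt_of_le Nat.zero_lt_two hα
  have hα0 : (α:ℚ) ≠ 0 := ne_of_gt hαQpos
  have hβQpos : (0:ℚ) < (β:ℚ) := by exact_mod_cast hβ
  have hval := poly_pin P (α:ℚ) (β:ℚ) hαQpos hD
  have hvalN : ∀ t : ℕ, 0 < t → (ehrhart u v t : ℚ) =
      (β:ℚ)/(2*(α:ℚ)) * (t:ℚ)^2 + (β:ℚ)/2 * t + P.eval 0 :=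
    fun t ht => (hP t ht).trans (hval t)
  by_cases hb1 : β = 1
  · exfalso
    subst hb1
    have hα5 : 5 ≤ α := by omega
    have hA5 : (5:ℝ) ≤ (α:ℝ) := by exact_mod_cast hα5
    simp only [Nat.cast_one, mul_one] at hquad
    have hu1 : 1 < u := by
      by_contra hc
      push_neg at hc
      nlinarith [hquad, mul_nonneg hApos.le (by linarith : (0:ℝ) ≤ 1 - u), pow_pos hu 2]
    have hu2 : u < 2 := by
      by_contra hc
      push_neg at hc
      nlinarith [hquad, mul_nonneg (by linarith : (0:ℝ) ≤ u - 2) (by linarith : (0:ℝ) ≤ (α:ℝ) - u)]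
    have e1 : ehrhart u v 1 = 1 := by
      have := ehrhart_one_row u v hu hv 1 0 (by push_cast; linarith)
        (by push_cast; linarith) (by push_cast; linarith)
      simpa using this
    have e2 : ehrhart u v 2 = 2 := by
      have := ehrhart_one_row u v hu hv 2 1 (by push_cast; linarith)
        (by push_cast; linarith) (by push_cast; linarith)
      simpa using this
    have q1 := hvalN 1 one_pos
    have q2 := hvalN 2 two_pos
    rw [e1] at q1
    rw [e2] at q2
    push_cast at q1 q2
    have hy : (1:ℚ)/(2*(α:ℚ)) = 1/6 := by linarith
    have hkey : (α:ℚ) = 3 := by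
      field_simp at hy
      linarith
    have : α = 3 := by exact_mod_cast hkey
    omega
  · have hβ2 : 2 ≤ β := by omega
    have hB2 : (2:ℝ) ≤ (β:ℝ) := by exact_mod_cast hβ2
    have hAB5 : (5:ℝ) ≤ (α:ℝ) * β := by
      have : (5:ℝ) ≤ ((α*β : ℕ):ℝ) := by exact_mod_cast hABn
      push_cast at this; linarith
    set w := (β:ℝ) * u with hwdef
    have hwpos : 0 < w := by positivity
    have huw : u * w = (β:ℝ) * u^2 := by rw [hwdef]; ring
    have hw_id : w^2 = (α:ℝ)*β*w - (α:ℝ)*β := by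
      rw [hwdef]; nlinarith [hquad]
    have hAw1 : (α:ℝ)*(w - 1) = u*w := by
      rw [hwdef]; linear_combination hquad
    have hw1 : 1 < w := by nlinarith [hw_id, hwpos]
    have hwhalf : 2*w < (α:ℝ)*β := by rw [hwdef]; nlinarith [hBpos]
    have hw2 : w < 2 := by
      by_contra hc
      push_neg at hc
      have h1 : (0:ℝ) ≤ w - 2 := by linarith
      have h2 : (0:ℝ) ≤ (α:ℝ)*β - 2 - w := by linarith
      nlinarith [mul_nonneg h1 h2, hw_id]
    have hw3 : 2*w < 3 := by
      by_contra hc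
      push_neg at hc
      have h1 : (0:ℝ) ≤ w - 3/2 := by linarith
      have h2 : (0:ℝ) ≤ (α:ℝ)*β - 2 - w := by linarith
      nlinarith [mul_nonneg h1 h2, hw_id]
    have hu1 : u < 1 := by nlinarith
    -- I(1) = β
    have e1 : ehrhart u v 1 = β := by
      have hc : ((β - 1 : ℕ):ℝ) = (β:ℝ) - 1 := by
        rw [Nat.cast_sub hβ]; norm_num
      have g1 : (1:ℝ) < v := by rw [hveq]; linarith
      have g2 : u * ((β - 1 : ℕ):ℝ) ≤ (1:ℝ) := by
        rw [hc]
        have p1 : (0:ℝ) ≤ ((α:ℝ) - 2)*(w - 1) :=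
          mul_nonneg (by linarith) (by linarith)
        have p2 : (0:ℝ) < u*(2 - w) := mul_pos hu (by linarith)
        nlinarith [hAw1]
      have g3 : (1:ℝ) < u * (((β - 1:ℕ):ℝ) + 1) := by
        rw [hc]
        have : u * ((β:ℝ) - 1 + 1) = w := by rw [hwdef]; ring
        rw [this]; exact hw1
      have := ehrhart_one_row u v hu hv 1 (β - 1) (by exact_mod_cast g1)
        (by exact_mod_cast g2) (by exact_mod_cast g3)
      rw [this]; omega
    by_cases hα2 : α = 2
    · right
      have hA2' : ((α:ℝ)) = 2 := by rw [hα2]; norm_num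
      have e2 : ehrhart u v 2 = 2 * β + 1 := by
        have hc : ((2*β - 2 : ℕ):ℝ) = 2*(β:ℝ) - 2 := by
          rw [Nat.cast_sub (by omega)]; push_cast; ring
        have g1 : (2:ℝ) < 2 * v := by rw [hveq, hA2']; linarith
        have g2 : u * ((2*β - 2 : ℕ):ℝ) ≤ (2:ℝ) := by
          rw [hc]
          have h1 : u * (2*(β:ℝ) - 2) = 2*w - 2*u := by rw [hwdef]; ring
          rw [h1]
          have p2 : (0:ℝ) < u*(2 - w) := mul_pos hu (by linarith)
          nlinarith [hAw1, hA2']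
        have g3 : (2:ℝ) < u * (((2*β - 2:ℕ):ℝ) + 1) := by
          rw [hc]
          have h1 : u * (2*(β:ℝ) - 2 + 1) = 2*w - u := by rw [hwdef]; ring
          rw [h1]
          have p2 : (0:ℝ) < u*(w - 1) := mul_pos hu (by linarith)
          nlinarith [hAw1, hA2']
        have g4 : u * ((1:ℕ):ℝ) + v ≤ (2:ℝ) := by push_cast; rw [hveq, hA2']; linarith
        have g5 : (2:ℝ) < u * (((1:ℕ):ℝ) + 1) + v := by push_cast; rw [hveq, hA2']; linarith
        have := ehrhart_two_rows u v hu hv 2 (2*β - 2) 1 (by exact_mod_cast g1)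
          (by exact_mod_cast g2) (by exact_mod_cast g3) (by exact_mod_cast g4)
          (by exact_mod_cast g5)
        rw [this]; omega
      have q1 := hvalN 1 one_pos
      have q2 := hvalN 2 two_pos
      rw [e1] at q1
      rw [e2] at q2
      have hc2 : ((α:ℚ)) = 2 := by rw [hα2]; norm_num
      rw [hc2] at q1 q2
      push_cast at q1 q2
      refine ⟨hα2, ?_⟩
      have : (β:ℚ) = 4 := by linarith
      exact_mod_cast this
    · have hα3' : 3 ≤ α := by omega
      have hA3 : (3:ℝ) ≤ (α:ℝ) := by exact_mod_cast hα3'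
      have e2 : ehrhart u v 2 = 2 * β := by
        have hc : ((2*β - 1 : ℕ):ℝ) = 2*(β:ℝ) - 1 := by
          rw [Nat.cast_sub (by omega)]; push_cast; ring
        have g1 : (2:ℝ) < v := by rw [hveq]; linarith
        have g2 : u * ((2*β - 1 : ℕ):ℝ) ≤ (2:ℝ) := by
          rw [hc]
          have h1 : u * (2*(β:ℝ) - 1) = 2*w - u := by rw [hwdef]; ring
          rw [h1]
          have p1 : (0:ℝ) ≤ ((α:ℝ) - 3)*(w - 1) :=
            mul_nonneg (by linarith) (by linarith)
          have p2 : (0:ℝ) < u*(3 - 2*w) := mul_pos hu (by linarith)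
          nlinarith [hAw1]
        have g3 : (2:ℝ) < u * (((2*β - 1:ℕ):ℝ) + 1) := by
          rw [hc]
          have h1 : u * (2*(β:ℝ) - 1 + 1) = 2*w := by rw [hwdef]; ring
          rw [h1]; linarith
        have := ehrhart_one_row u v hu hv 2 (2*β - 1) (by exact_mod_cast g1)
          (by exact_mod_cast g2) (by exact_mod_cast g3)
        rw [this]; omega
      by_cases hα3 : α = 3
      · left
        have hA3' : ((α:ℝ)) = 3 := by rw [hα3]; norm_num
        have e3 : ehrhart u v 3 = 3 * β + 1 := by
          have hc : ((3*β - 2 : ℕ):ℝ) = 3*(β:ℝ) - 2 := by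
            rw [Nat.cast_sub (by omega)]; push_cast; ring
          have g1 : (3:ℝ) < 2 * v := by rw [hveq, hA3']; linarith
          have g2 : u * ((3*β - 2 : ℕ):ℝ) ≤ (3:ℝ) := by
            rw [hc]
            have h1 : u * (3*(β:ℝ) - 2) = 3*w - 2*u := by rw [hwdef]; ring
            rw [h1]
            have p2 : (0:ℝ) < u * (2 - w) := mul_pos hu (by linarith)
            nlinarith [hAw1, hA3']
          have g3 : (3:ℝ) < u * (((3*β - 2:ℕ):ℝ) + 1) := by
            rw [hc]
            have h1 : u * (3*(β:ℝ) - 2 + 1) = 3*w - u := by rw [hwdef]; ring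
            rw [h1]
            have p2 : (0:ℝ) < u * (w - 1) := mul_pos hu (by linarith)
            nlinarith [hAw1, hA3']
          have g4 : u * ((1:ℕ):ℝ) + v ≤ (3:ℝ) := by push_cast; rw [hveq, hA3']; linarith
          have g5 : (3:ℝ) < u * (((1:ℕ):ℝ) + 1) + v := by push_cast; rw [hveq, hA3']; linarith
          have := ehrhart_two_rows u v hu hv 3 (3*β - 2) 1 (by exact_mod_cast g1)
            (by exact_mod_cast g2) (by exact_mod_cast g3) (by exact_mod_cast g4)
            (by exact_mod_cast g5)
          rw [this]; omega
        have q2 := hvalN 2 two_pos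
        have q3 := hvalN 3 (by norm_num)
        rw [e2] at q2
        rw [e3] at q3
        have hc3 : ((α:ℚ)) = 3 := by rw [hα3]; norm_num
        rw [hc3] at q2 q3
        push_cast at q2 q3
        refine ⟨hα3, ?_⟩
        have : (β:ℚ) = 3 := by linarith
        exact_mod_cast this
      · exfalso
        have q1 := hvalN 1 one_pos
        have q2 := hvalN 2 two_pos
        rw [e1] at q1
        rw [e2] at q2
        push_cast at q1 q2
        have hy : 3*((β:ℚ)/(2*(α:ℚ))) = (β:ℚ)/2 := by linarith
        have haQ : 2*(α:ℚ)*((β:ℚ)/(2*(α:ℚ))) = (β:ℚ) := by field_simp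
        have h5 : (α:ℚ) * (3 * ((β:ℚ)/(2*(α:ℚ)))) = (α:ℚ) * ((β:ℚ)/2) := by rw [hy]
        have h6 : (3:ℚ)/2 * (2*(α:ℚ)*((β:ℚ)/(2*(α:ℚ)))) = (α:ℚ)*(3*((β:ℚ)/(2*(α:ℚ)))) := by
          ring
        have h7 : (3:ℚ)/2 * (β:ℚ) = (α:ℚ)*((β:ℚ)/2) := by rw [← h5, ← h6, haQ]
        have h8 : (β:ℚ) * ((α:ℚ) - 3) = 0 := by linear_combination (-2)*h7
        rcases mul_eq_zero.1 h8 with h | h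
        · exact hβQpos.ne' h
        · have hfin : (α:ℚ) = 3 := by linarith
          exact hα3 (by exact_mod_cast hfin)

lemma ehrhart_swap (u v : ℝ) (t : ℕ) : ehrhart u v t = ehrhart v u t := by
  unfold ehrhart
  have hswap : {p : ℕ × ℕ | v * p.1 + u * p.2 ≤ t} =
      Prod.swap '' {p : ℕ × ℕ | u * p.1 + v * p.2 ≤ t} := by
    ext ⟨x, y⟩
    simp only [Set.mem_setOf_eq, Set.mem_image, Prod.exists, Prod.swap_prod_mk,
      Prod.mk.injEq]
    constructor
    · intro h
      exact ⟨y, x, by linarith, rfl, rfl⟩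
    · rintro ⟨a, b, hab, rfl, rfl⟩
      linarith
  rw [hswap, Set.ncard_image_of_injective _ Prod.swap_injective]

/-- If an admissible irrational triangle is pseudo-integral then `α = 1` or
`(α,β) ∈ {(3,3),(2,4)}`. -/
theorem stmt_4 (u v : ℝ) (hu : 0 < u) (hv : 0 < v) (hirr : Irrational (u / v))
    (α β : ℕ) (hα : 0 < α) (hβ : 0 < β)
    (hsum : u + v = α) (hinv : 1 / u + 1 / v = β)
    (hpoly : ∃ P : Polynomial ℚ, ∀ t : ℕ, 0 < t →
      (ehrhart u v t : ℚ) = P.eval (t : ℚ)) :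
    α = 1 ∨ (α = 3 ∧ β = 3) ∨ (α = 2 ∧ β = 4) := by
  by_cases hα1 : α = 1
  · exact Or.inl hα1
  have hα2 : 2 ≤ α := by omega
  have hiu : Irrational u := by
    rw [Irrational]
    by_contra h
    obtain ⟨q, hq⟩ := h
    apply hirr
    refine ⟨q / ((α:ℚ) - q), ?_⟩
    have hvq : v = (α:ℝ) - q := by rw [hq]; linarith
    push_cast
    rw [hq, show (α:ℝ) - u = v by linarith]
  have hiv : Irrational v := by
    rw [Irrational]
    by_contra h
    obtain ⟨q, hq⟩ := h
    apply hirr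
    refine ⟨((α:ℚ) - q) / q, ?_⟩
    have huq : u = (α:ℝ) - q := by rw [hq]; linarith
    push_cast
    rw [hq, show (α:ℝ) - v = u by linarith]
  have hne : u ≠ v := by
    intro h
    apply hirr
    refine ⟨1, ?_⟩
    rw [h, div_self hv.ne']
    norm_num
  rcases lt_or_gt_of_ne hne with hlt | hgt
  · rcases main_lemma u v hu hv hlt hiu hiv α β hα2 hβ hsum hinv hpoly with h | h
    · exact Or.inr (Or.inl h)
    · exact Or.inr (Or.inr h)
  · have hpoly' : ∃ P : Polynomial ℚ, ∀ t : ℕ, 0 < t →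
        (ehrhart v u t : ℚ) = P.eval (t : ℚ) := by
      obtain ⟨P, hP⟩ := hpoly
      exact ⟨P, fun t ht => by rw [← ehrhart_swap]; exact hP t ht⟩
    rcases main_lemma v u hv hu hgt hiv hiu α β hα2 hβ (by linarith) (by linarith)
      hpoly' with h | h
    · exact Or.inr (Or.inl h)
    · exact Or.inr (Or.inr h)
end

section
/- Let p,q,r,s be positive integers with gcd(p,q) = gcd(r,s) = 1. If s | p, p | (rq+1), and gcd((rq+1)/p, s) = 1, then q is a period of the Ehrhart quasipolynomial of the triangle with vertices (0,0), (p/q, 0), (0, r/s): i.e., there exist rationals A, B and a function c of period q such that #{(x,y)∈ℤ_{≥0}² : (q/p)x + (s/r)y ≤ t} = At² + Bt + c(t) for all positive integers t. -/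
open Finset

lemma mod_helper {d Q n c : ℕ} (h : n = d * Q + c) (hc : c < d) : n % d = c := by
  subst h
  rw [Nat.mul_add_mod, Nat.mod_eq_of_lt hc]

lemma modA {p s j n X : ℕ} (h : n + j = p * X) (hj1 : 1 ≤ j) (hjp : j ≤ p) (hs : 0 < s) :
    n % (p * s) + j = p * (X % s) + (if X % s = 0 then p * s else 0) := by
  have hp : 0 < p := lt_of_lt_of_le hj1 hjp
  have hXe : s * (X / s) + X % s = X := Nat.div_add_mod X s
  set w := X % s with hw
  set Q := X / s with hQ
  have hws : w < s := Nat.mod_lt _ hs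
  have hjps : j ≤ p * s := hjp.trans (Nat.le_mul_of_pos_right p hs)
  have hX1 : 0 < X := by
    rcases Nat.eq_zero_or_pos X with h' | h'
    · rw [h', mul_zero] at h; omega
    · exact h'
  by_cases h0 : w = 0
  · have hXQ : X = s * Q := by rw [h0, add_zero] at hXe; exact hXe.symm
    have hQ1 : 0 < Q := by
      rcases Nat.eq_zero_or_pos Q with h' | h'
      · rw [h', mul_zero] at hXQ; omega
      · exact h'
    obtain ⟨Q', hQ'⟩ : ∃ Q', Q = Q' + 1 := ⟨Q - 1, by omega⟩
    have key : n = p * s * Q' + (p * s - j) := by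
      have e1 : n + j = p * s * Q' + p * s := by rw [h, hXQ, hQ']; ring
      have e3 : n + j = (p * s * Q' + (p * s - j)) + j := by
        rw [add_assoc, Nat.sub_add_cancel hjps]; exact e1
      exact Nat.add_right_cancel e3
    rw [mod_helper key (Nat.sub_lt (Nat.mul_pos hp hs) hj1), h0, mul_zero, if_pos rfl,
      zero_add]
    exact Nat.sub_add_cancel hjps
  · have hw1 : 1 ≤ w := Nat.one_le_iff_ne_zero.mpr h0
    have hjpw : j ≤ p * w := hjp.trans (by
      calc p = p * 1 := (mul_one p).symm
        _ ≤ p * w := Nat.mul_le_mul_left p hw1)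
    have hpw_lt : p * w < p * s := mul_lt_mul_of_pos_left hws hp
    have key : n = p * s * Q + (p * w - j) := by
      have e1 : n + j = p * s * Q + p * w := by rw [h, ← hXe]; ring
      have e3 : n + j = (p * s * Q + (p * w - j)) + j := by
        rw [add_assoc, Nat.sub_add_cancel hjpw]; exact e1
      exact Nat.add_right_cancel e3
    rw [mod_helper key (lt_of_le_of_lt (Nat.sub_le _ _) hpw_lt), if_neg h0, add_zero]
    exact Nat.sub_add_cancel hjpw

lemma block_inj {k s : ℕ} (hs : 0 < s) (hk : Nat.gcd k s = 1) (c : ℕ) :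
    ∀ j1 ∈ range s, ∀ j2 ∈ range s, (c + j1 * k) % s = (c + j2 * k) % s → j1 = j2 := by
  intro j1 h1 j2 h2 hg
  simp only [mem_range] at h1 h2
  have h3 : j1 * k ≡ j2 * k [MOD s] := Nat.ModEq.add_left_cancel' c hg
  have h4 : j1 ≡ j2 [MOD s] := h3.cancel_right_of_coprime (by rwa [Nat.gcd_comm] at hk)
  have h5 := h4
  unfold Nat.ModEq at h5
  rwa [Nat.mod_eq_of_lt h1, Nat.mod_eq_of_lt h2] at h5

lemma block_image {k s : ℕ} (hs : 0 < s) (hk : Nat.gcd k s = 1) (c : ℕ) :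
    (range s).image (fun j => (c + j * k) % s) = range s := by
  apply Finset.eq_of_subset_of_card_le
  · intro x hx
    simp only [mem_image] at hx
    obtain ⟨j, _, rfl⟩ := hx
    exact mem_range.mpr (Nat.mod_lt _ hs)
  · rw [Finset.card_image_of_injOn
      (fun j1 h1 j2 h2 => block_inj hs hk c j1 (by simpa using h1) j2 (by simpa using h2))]

lemma block_sum {k s : ℕ} (hs : 0 < s) (hk : Nat.gcd k s = 1) (c : ℕ) :
    ∑ j ∈ range s, ((c + j * k) % s) = ∑ j ∈ range s, j := by
  conv_rhs => rw [← block_image hs hk c]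
  rw [Finset.sum_image (block_inj hs hk c)]

lemma block_count {k s : ℕ} (hs : 0 < s) (hk : Nat.gcd k s = 1) (c : ℕ) :
    ∑ j ∈ range s, (if (c + j * k) % s = 0 then (1 : ℕ) else 0) = 1 := by
  rw [← Finset.card_filter]
  have h0 : (0 : ℕ) ∈ (range s).image (fun j => (c + j * k) % s) := by
    rw [block_image hs hk c]; exact mem_range.mpr hs
  obtain ⟨j0, hj0, hg0⟩ := Finset.mem_image.mp h0
  rw [Finset.card_eq_one]
  refine ⟨j0, ?_⟩
  ext j
  simp only [Finset.mem_filter, Finset.mem_singleton]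
  constructor
  · rintro ⟨hj, hz⟩
    exact block_inj hs hk c j hj j0 hj0 (by rw [hz, hg0])
  · rintro rfl; exact ⟨hj0, hg0⟩

lemma rep_sum {k s : ℕ} (hs : 0 < s) (hk : Nat.gcd k s = 1) (m c : ℕ) :
    ∑ i ∈ range (s * m), ((c + i * k) % s) = m * ∑ j ∈ range s, j := by
  induction m with
  | zero => simp
  | succ n ih =>
    rw [show s * (n + 1) = s * n + s from by ring, Finset.sum_range_add, ih]
    have hcongr : ∀ j ∈ range s, ((c + (s * n + j) * k) % s) = (((c + s * n * k) + j * k) % s) := by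
      intro j _
      have e : c + (s * n + j) * k = (c + s * n * k) + j * k := by ring
      rw [e]
    rw [Finset.sum_congr rfl hcongr, block_sum hs hk (c + s * n * k)]
    ring

lemma rep_count {k s : ℕ} (hs : 0 < s) (hk : Nat.gcd k s = 1) (m c : ℕ) :
    ∑ i ∈ range (s * m), (if (c + i * k) % s = 0 then (1 : ℕ) else 0) = m := by
  induction m with
  | zero => simp
  | succ n ih =>
    rw [show s * (n + 1) = s * n + s from by ring, Finset.sum_range_add, ih]
    have hcongr : ∀ j ∈ range s, (if (c + (s * n + j) * k) % s = 0 then (1 : ℕ) else 0)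
        = (if ((c + s * n * k) + j * k) % s = 0 then (1 : ℕ) else 0) := by
      intro j _
      have e : c + (s * n + j) * k = (c + s * n * k) + j * k := by ring
      rw [e]
    rw [Finset.sum_congr rfl hcongr, block_count hs hk (c + s * n * k)]

lemma yset_eq {b K : ℕ} (hb : 0 < b) : {y : ℕ | b * y ≤ K} = Set.Iic (K / b) := by
  ext y
  simp [Set.mem_Iic, Nat.le_div_iff_mul_le hb, mul_comm]

lemma yset_ncard {b K : ℕ} (hb : 0 < b) : {y : ℕ | b * y ≤ K}.ncard = K / b + 1 := by
  rw [yset_eq hb, ← Finset.coe_Iic, Set.ncard_coe_finset, Nat.card_Iic]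

lemma cnt_fin {a b M : ℕ} (ha : 0 < a) (hb : 0 < b) :
    {z : ℕ × ℕ | a * z.1 + b * z.2 ≤ M}.Finite := by
  apply Set.Finite.subset ((Set.finite_Iic M).prod (Set.finite_Iic M))
  rintro ⟨x, y⟩ hz
  simp only [Set.mem_setOf_eq] at hz
  have hax : a * x ≤ M := le_trans (Nat.le_add_right _ _) hz
  have hby : b * y ≤ M := le_trans (Nat.le_add_left _ _) hz
  have hx : x ≤ M := le_trans (Nat.le_mul_of_pos_left x ha) hax
  have hy : y ≤ M := le_trans (Nat.le_mul_of_pos_left y hb) hby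
  exact Set.mem_prod.mpr ⟨Set.mem_Iic.mpr hx, Set.mem_Iic.mpr hy⟩

lemma cnt_rec {a b : ℕ} (ha : 0 < a) (hb : 0 < b) (M : ℕ) :
    {z : ℕ × ℕ | a * z.1 + b * z.2 ≤ M + a}.ncard
      = {z : ℕ × ℕ | a * z.1 + b * z.2 ≤ M}.ncard + ((M + a) / b + 1) := by
  have hdecomp : {z : ℕ × ℕ | a * z.1 + b * z.2 ≤ M + a}
      = (fun y => ((0 : ℕ), y)) '' {y : ℕ | b * y ≤ M + a}
        ∪ (fun z : ℕ × ℕ => (z.1 + 1, z.2)) '' {z : ℕ × ℕ | a * z.1 + b * z.2 ≤ M} := by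
    ext ⟨x, y⟩
    simp only [Set.mem_setOf_eq, Set.mem_union, Set.mem_image, Prod.mk.injEq]
    constructor
    · intro h
      cases x with
      | zero => exact Or.inl ⟨y, by simpa using h, rfl, rfl⟩
      | succ x' =>
        refine Or.inr ⟨(x', y), ?_, rfl, rfl⟩
        simp only [Set.mem_setOf_eq]
        have e : a * (x' + 1) = a * x' + a := by ring
        rw [e] at h
        linarith
    · rintro (⟨y', hy', rfl, rfl⟩ | ⟨⟨x', y'⟩, hz, rfl, rfl⟩)
      · simpa using hy'
      · simp only [Set.mem_setOf_eq] at hz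
        have e : a * (x' + 1) = a * x' + a := by ring
        simp only []
        rw [e]
        linarith
  have hfin1 : ((fun y => ((0 : ℕ), y)) '' {y : ℕ | b * y ≤ M + a}).Finite :=
    Set.Finite.image _ (by rw [yset_eq hb]; exact Set.finite_Iic _)
  have hfin2 : ((fun z : ℕ × ℕ => (z.1 + 1, z.2)) '' {z : ℕ × ℕ | a * z.1 + b * z.2 ≤ M}).Finite :=
    Set.Finite.image _ (cnt_fin ha hb)
  have hdisj : Disjoint ((fun y => ((0 : ℕ), y)) '' {y : ℕ | b * y ≤ M + a})
      ((fun z : ℕ × ℕ => (z.1 + 1, z.2)) '' {z : ℕ × ℕ | a * z.1 + b * z.2 ≤ M}) := by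
    rw [Set.disjoint_left]
    rintro z ⟨y', _, rfl⟩ ⟨⟨x', y''⟩, _, hz2⟩
    have := congrArg Prod.fst hz2
    simp at this
  have hinj1 : Function.Injective (fun y : ℕ => ((0 : ℕ), y)) := fun y1 y2 h => by
    simpa using congrArg Prod.snd h
  have hinj2 : Function.Injective (fun z : ℕ × ℕ => (z.1 + 1, z.2)) := fun z1 z2 h => by
    rw [Prod.ext_iff] at h ⊢
    simp only at h
    exact ⟨by omega, h.2⟩
  rw [hdecomp, Set.ncard_union_eq hdisj hfin1 hfin2, Set.ncard_image_of_injective _ hinj1,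
    Set.ncard_image_of_injective _ hinj2, yset_ncard hb]
  omega

lemma cnt_iter {a b : ℕ} (ha : 0 < a) (hb : 0 < b) (M : ℕ) (J : ℕ) :
    {z : ℕ × ℕ | a * z.1 + b * z.2 ≤ M + J * a}.ncard
      = {z : ℕ × ℕ | a * z.1 + b * z.2 ≤ M}.ncard
        + ∑ i ∈ range J, ((M + (i + 1) * a) / b + 1) := by
  induction J with
  | zero => simp
  | succ n ih =>
    rw [show M + (n + 1) * a = (M + n * a) + a from by ring, cnt_rec ha hb, ih,
      sum_range_succ, show M + n * a + a = M + (n + 1) * a from by ring]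
    ring

lemma cast_div_eq (n d : ℕ) (hd : 0 < d) :
    ((n / d : ℕ) : ℚ) = ((n : ℚ) - ((n % d : ℕ) : ℚ)) / d := by
  have h := Nat.div_add_mod n d
  have hc : (d : ℚ) * ((n / d : ℕ) : ℚ) + ((n % d : ℕ) : ℚ) = (n : ℚ) := by exact_mod_cast h
  have hd' : (d : ℚ) ≠ 0 := by positivity
  field_simp
  linarith

lemma ehrhart_link0 (p q r s t : ℕ) (hp : 0 < p) (hr : 0 < r) :
    {z : ℕ × ℕ | (q : ℝ) / p * z.1 + (s : ℝ) / r * z.2 ≤ t}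
      = {z : ℕ × ℕ | r * q * z.1 + p * s * z.2 ≤ p * r * t} := by
  ext z
  simp only [Set.mem_setOf_eq]
  have hp' : (0 : ℝ) < p := by exact_mod_cast hp
  have hr' : (0 : ℝ) < r := by exact_mod_cast hr
  rw [div_mul_eq_mul_div, div_mul_eq_mul_div, div_add_div _ _ (ne_of_gt hp') (ne_of_gt hr'),
    div_le_iff₀ (by positivity), ← Nat.cast_le (α := ℝ)]
  push_cast
  constructor <;> intro h <;> nlinarith [h]
lemma S_const {p q r s k m : ℕ} (hp : 0 < p) (hs : 0 < s)
    (hk : r * q + 1 = p * k) (hm : p = s * m) (hks : Nat.gcd k s = 1) (t : ℕ) :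
    ∑ i ∈ range p, ((p * r * t + (i + 1) * (r * q)) % (p * s)) + ∑ i ∈ range p, (i + 1)
      = p * (m * ∑ j ∈ range s, j) + (p * s) * m := by
  rw [← Finset.sum_add_distrib]
  have hterm : ∀ i ∈ range p,
      (p * r * t + (i + 1) * (r * q)) % (p * s) + (i + 1)
        = p * ((r * t + (i + 1) * k) % s)
          + (if (r * t + (i + 1) * k) % s = 0 then p * s else 0) := by
    intro i hi
    apply modA (X := r * t + (i + 1) * k) ?_ (by omega) (mem_range.mp hi) hs
    calc p * r * t + (i + 1) * (r * q) + (i + 1) = p * r * t + (i + 1) * (r * q + 1) := by ring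
      _ = p * (r * t + (i + 1) * k) := by rw [hk]; ring
  rw [Finset.sum_congr rfl hterm, Finset.sum_add_distrib, ← Finset.mul_sum]
  congr 1
  · congr 1
    have hc : ∀ i ∈ range p, (r * t + (i + 1) * k) % s = ((r * t + k) + i * k) % s := by
      intro i _
      congr 1
      ring
    rw [Finset.sum_congr rfl hc, show Finset.range p = Finset.range (s * m) from by rw [← hm],
      rep_sum hs hks m (r * t + k)]
  · have hc : ∀ i ∈ range p, (if (r * t + (i + 1) * k) % s = 0 then p * s else 0)
        = (p * s) * (if ((r * t + k) + i * k) % s = 0 then 1 else 0) := by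
      intro i _
      rw [show r * t + (i + 1) * k = (r * t + k) + i * k from by ring]
      split <;> simp
    rw [Finset.sum_congr rfl hc, ← Finset.mul_sum,
      show Finset.range p = Finset.range (s * m) from by rw [← hm],
      rep_count hs hks m (r * t + k)]

/-- Criterion for period collapse: `q` is a period of the Ehrhart
quasipolynomial of the triangle with vertices `(0,0), (p/q,0), (0,r/s)`. -/
theorem stmt_11 (p q r s : ℕ) (hp : 0 < p) (hq : 0 < q) (hr : 0 < r) (hs : 0 < s)
    (hpq : Nat.gcd p q = 1) (hrs : Nat.gcd r s = 1)
    (h1 : s ∣ p) (h2 : p ∣ (r * q + 1)) (h3 : Nat.gcd ((r * q + 1) / p) s = 1) :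
    ∃ A B : ℚ, ∃ c : ℕ → ℚ, (∀ t : ℕ, c (t + q) = c t) ∧
      ∀ t : ℕ, 0 < t →
        (ehrhart ((q : ℝ) / p) ((s : ℝ) / r) t : ℚ) = A * t ^ 2 + B * t + c t := by
  obtain ⟨k, hk⟩ : ∃ k, r * q + 1 = p * k := ⟨(r * q + 1) / p, (Nat.mul_div_cancel' h2).symm⟩
  obtain ⟨m, hm⟩ : ∃ m, p = s * m := ⟨p / s, (Nat.mul_div_cancel' h1).symm⟩
  have hks : Nat.gcd k s = 1 := by
    have e : (r * q + 1) / p = k := by rw [hk, Nat.mul_div_cancel_left k hp]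
    rwa [e] at h3
  have hd0 : 0 < p * s := Nat.mul_pos hp hs
  have ha0 : 0 < r * q := Nat.mul_pos hr hq
  set N : ℕ → ℕ := fun t => {z : ℕ × ℕ | r * q * z.1 + p * s * z.2 ≤ p * r * t}.ncard with hN
  have hlink : ∀ t : ℕ, ehrhart ((q : ℝ) / p) ((s : ℝ) / r) t = N t := by
    intro t
    unfold ehrhart
    rw [ehrhart_link0 p q r s t hp hr]
  have hrec : ∀ t : ℕ,
      N (t + q) = N t + ∑ i ∈ range p, ((p * r * t + (i + 1) * (r * q)) / (p * s) + 1) := by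
    intro t
    simp only [hN]
    rw [show p * r * (t + q) = p * r * t + p * (r * q) from by ring]
    exact cnt_iter ha0 hd0 (p * r * t) p
  set T : ℕ := ∑ i ∈ range p, (i + 1) with hT
  set Ct : ℕ := p * (m * ∑ j ∈ range s, j) + (p * s) * m with hCt
  have hS : ∀ t : ℕ,
      ∑ i ∈ range p, ((p * r * t + (i + 1) * (r * q)) % (p * s)) + T = Ct :=
    fun t => S_const hp hs hk hm hks t
  have hps : ((p : ℚ) * s) ≠ 0 := by positivity
  have hq0 : (q : ℚ) ≠ 0 := by positivity
  -- the ℚ-valued recursion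
  have hQrec : ∀ t : ℕ, (N (t + q) : ℚ)
      = N t + ((p : ℚ) * p * r / ((p : ℚ) * s)) * t
        + ((p : ℚ) + ((r : ℚ) * q * T + T - Ct) / ((p : ℚ) * s)) := by
    intro t
    rw [hrec t]
    push_cast
    rw [Finset.sum_add_distrib, Finset.sum_const, card_range, nsmul_eq_mul, mul_one]
    have hdivs : ∑ i ∈ range p, (((p * r * t + (i + 1) * (r * q)) / (p * s) : ℕ) : ℚ)
        = ((p : ℚ) * p * r * t + (r : ℚ) * q * T + T - Ct) / ((p : ℚ) * s) := by
      rw [Finset.sum_congr rfl (fun i _ => cast_div_eq (p * r * t + (i + 1) * (r * q)) (p * s) hd0)]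
      rw [← Finset.sum_div, Finset.sum_sub_distrib]
      have h1' : ∑ i ∈ range p, ((p * r * t + (i + 1) * (r * q) : ℕ) : ℚ)
          = (p : ℚ) * p * r * t + (r : ℚ) * q * T := by
        have hTq : ((T : ℕ) : ℚ) = ∑ i ∈ range p, ((i : ℚ) + 1) := by
          rw [hT]; push_cast; rfl
        push_cast
        rw [Finset.sum_add_distrib, Finset.sum_const, card_range, nsmul_eq_mul,
          ← Finset.sum_mul, ← hTq]
        push_cast
        ring
      have h2' : ∑ i ∈ range p, (((p * r * t + (i + 1) * (r * q)) % (p * s) : ℕ) : ℚ)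
          = (Ct : ℚ) - T := by
        have hcast : (∑ i ∈ range p, (((p * r * t + (i + 1) * (r * q)) % (p * s) : ℕ) : ℚ))
            + (T : ℚ) = (Ct : ℚ) := by
          have := hS t
          push_cast [← this]
          ring
        linarith
      rw [h1', h2']
      push_cast
      ring
    rw [hdivs]
    have hpsq : (↑(p * s) : ℚ) = (p : ℚ) * s := by push_cast; ring
    field_simp
    ring
  -- define the quasipolynomial data
  set α : ℚ := (p : ℚ) * p * r / ((p : ℚ) * s) with hα
  set β : ℚ := (p : ℚ) + ((r : ℚ) * q * T + T - Ct) / ((p : ℚ) * s) with hβ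
  refine ⟨α / (2 * q), (β - (α / (2 * q)) * q ^ 2) / q,
    fun t => (N t : ℚ) - (α / (2 * q)) * t ^ 2 - ((β - (α / (2 * q)) * q ^ 2) / q) * t, ?_, ?_⟩
  · intro t
    have h := hQrec t
    push_cast
    rw [h]
    field_simp
    ring
  · intro t _
    rw [hlink t]
    ring
end

section
/- Let p,q,r,s be positive integers with gcd(p,q) = gcd(r,s) = 1. If s|p, p|(rq+1), gcd((rq+1)/p, s) = 1, and also q|r, r|(sp+1), gcd((sp+1)/r, q) = 1, then the triangle with vertices (0,0), (p/q, 0), (0, r/s) is pseudo-integral: its Ehrhart function is a polynomial in t. -/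
open Finset

def gcol (A B N x : ℕ) : ℕ := if A * x ≤ N then (N - A * x) / B + 1 else 0

def cnt (A B N : ℕ) : ℕ := ∑ x ∈ Finset.range (N + 1), gcol A B N x

def Ftri (A B N : ℕ) : Finset (ℕ × ℕ) :=
  (Finset.range (N+1) ×ˢ Finset.range (N+1)).filter (fun z => A * z.1 + B * z.2 ≤ N)

lemma mem_Ftri {A B N : ℕ} (hA : 0 < A) (hB : 0 < B) {a b : ℕ} :
    (a, b) ∈ Ftri A B N ↔ A * a + B * b ≤ N := by
  simp only [Ftri, mem_filter, mem_product, mem_range]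
  constructor
  · exact fun h => h.2
  · intro h
    have h1 : a ≤ A * a := Nat.le_mul_of_pos_left _ hA
    have h2 : b ≤ B * b := Nat.le_mul_of_pos_left _ hB
    exact ⟨⟨by omega, by omega⟩, h⟩

lemma gcol_iff {A B N x : ℕ} (hB : 0 < B) {y : ℕ} :
    y < gcol A B N x ↔ A * x + B * y ≤ N := by
  simp only [gcol]
  by_cases hAx : A * x ≤ N
  · rw [if_pos hAx, Nat.lt_succ_iff, Nat.le_div_iff_mul_le hB, Nat.mul_comm y B]
    omega
  · rw [if_neg hAx]
    constructor
    · omega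
    · intro h; omega

lemma Ftri_card (A B N : ℕ) (hA : 0 < A) (hB : 0 < B) :
    (Ftri A B N).card = cnt A B N := by
  rw [Finset.card_eq_sum_card_fiberwise (f := fun z => z.1) (t := Finset.range (N+1))
    (fun z hz => by
      have hz' : z ∈ Ftri A B N := hz
      simp only [Ftri, mem_filter, mem_product, mem_range] at hz'
      exact mem_range.2 hz'.1.1)]
  refine Finset.sum_congr rfl (fun x hx => ?_)
  have hset : (Ftri A B N).filter (fun z => z.1 = x)
      = (Finset.range (gcol A B N x)).image (fun y => (x, y)) := by
    ext z
    obtain ⟨a, b⟩ := z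
    simp only [mem_filter, mem_image, mem_range]
    constructor
    · rintro ⟨hmem, h1⟩
      obtain rfl : a = x := h1
      rw [mem_Ftri hA hB] at hmem
      exact ⟨b, (gcol_iff hB).2 hmem, rfl⟩
    · rintro ⟨y, hy, hz⟩
      rw [Prod.mk.injEq] at hz
      obtain ⟨rfl, rfl⟩ := hz
      exact ⟨(mem_Ftri hA hB).2 ((gcol_iff hB).1 hy), rfl⟩
  rw [hset, Finset.card_image_of_injective _ (fun y₁ y₂ h => by
      simpa using congrArg Prod.snd h), Finset.card_range]


lemma Ftri_swap (A B N : ℕ) (hA : 0 < A) (hB : 0 < B) :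
    Ftri B A N = (Ftri A B N).image Prod.swap := by
  ext z
  obtain ⟨a, b⟩ := z
  rw [mem_Ftri hB hA]
  constructor
  · intro h
    exact Finset.mem_image.2 ⟨(b, a), (mem_Ftri hA hB).2 (by omega), rfl⟩
  · intro h
    obtain ⟨⟨c, d⟩, hc, hz⟩ := Finset.mem_image.1 h
    rw [mem_Ftri hA hB] at hc
    rw [Prod.swap_prod_mk, Prod.mk.injEq] at hz
    obtain ⟨rfl, rfl⟩ := hz
    omega

lemma cnt_swap (A B N : ℕ) (hA : 0 < A) (hB : 0 < B) : cnt A B N = cnt B A N := by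
  rw [← Ftri_card A B N hA hB, ← Ftri_card B A N hB hA, Ftri_swap A B N hA hB,
    Finset.card_image_of_injective _ Prod.swap_injective]

lemma cnt_zero (A B : ℕ) : cnt A B 0 = 1 := by
  show (∑ x ∈ Finset.range 1, gcol A B 0 x) = 1
  rw [Finset.sum_range_one]
  simp [gcol]

lemma gcol_shift {A B M p x : ℕ} : gcol A B (M + p * A) (x + p) = gcol A B M x := by
  have h : A * (x + p) = A * x + p * A := by ring
  simp only [gcol, h]
  by_cases hx : A * x ≤ M
  · rw [if_pos (by omega), if_pos hx]
    have he : M + p * A - (A * x + p * A) = M - A * x := by omega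
    rw [he]
  · rw [if_neg (by omega), if_neg hx]

lemma cnt_shift (A B M p : ℕ) (hA : 0 < A) :
    cnt A B (M + p * A) = (∑ x ∈ Finset.range p, gcol A B (M + p * A) x) + cnt A B M := by
  have hpA : p ≤ p * A := Nat.le_mul_of_pos_right p hA
  have hpK : p ≤ M + p * A + 1 := by omega
  rw [cnt, Finset.range_eq_Ico, ← Finset.sum_Ico_consecutive _ (Nat.zero_le p) hpK,
    ← Finset.range_eq_Ico]
  congr 1
  rw [Finset.sum_Ico_eq_sum_range]
  have hterm : ∀ j, gcol A B (M + p * A) (p + j) = gcol A B M j := by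
    intro j
    rw [Nat.add_comm p j]
    exact gcol_shift
  rw [Finset.sum_congr rfl (fun j _ => hterm j)]
  rw [cnt]
  refine (Finset.sum_subset ?_ ?_).symm
  · apply Finset.range_subset_range.2
    generalize hK : p * A = K at hpA ⊢
    omega
  · intro j _ hj
    rw [mem_range, not_lt] at hj
    have hAj : j ≤ A * j := Nat.le_mul_of_pos_left _ hA
    have : ¬ (A * j ≤ M) := by omega
    simp [gcol, this]

lemma res_block (s e d : ℕ) (hs : 0 < s) (hcop : Nat.Coprime e s) (hd : e * (s - 1) ≤ d) :
    ∑ j ∈ Finset.range s, (d - e * j) % s = ∑ j ∈ Finset.range s, j := by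
  have hle : ∀ j ∈ Finset.range s, e * j ≤ d := by
    intro j hj
    rw [mem_range] at hj
    exact le_trans (Nat.mul_le_mul_left e (by omega)) hd
  have hinj : ∀ j₁ ∈ Finset.range s, ∀ j₂ ∈ Finset.range s,
      (d - e * j₁) % s = (d - e * j₂) % s → j₁ = j₂ := by
    intro j₁ h₁ j₂ h₂ heq
    have hl₁ := hle j₁ h₁
    have hl₂ := hle j₂ h₂
    rw [mem_range] at h₁ h₂
    have h' : d + e * j₂ ≡ d + e * j₁ [MOD s] := by
      have base : (d - e * j₁) ≡ (d - e * j₂) [MOD s] := heq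
      have := base.add_right (e * j₁ + e * j₂)
      have e1 : d - e * j₁ + (e * j₁ + e * j₂) = d + e * j₂ := by omega
      have e2 : d - e * j₂ + (e * j₁ + e * j₂) = d + e * j₁ := by omega
      rwa [e1, e2] at this
    have hmod : e * j₂ ≡ e * j₁ [MOD s] := (Nat.ModEq.add_left_cancel' d) h'
    have hj : j₂ ≡ j₁ [MOD s] :=
      Nat.ModEq.cancel_left_of_coprime (by rw [Nat.gcd_comm]; exact hcop) hmod
    have : j₂ % s = j₁ % s := hj
    rw [Nat.mod_eq_of_lt h₁, Nat.mod_eq_of_lt h₂] at this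
    omega
  have himg : (Finset.range s).image (fun j => (d - e * j) % s) = Finset.range s := by
    apply Finset.eq_of_subset_of_card_le
    · intro k hk
      obtain ⟨j, hj, rfl⟩ := Finset.mem_image.1 hk
      exact mem_range.2 (Nat.mod_lt _ hs)
    · rw [Finset.card_range, Finset.card_image_of_injOn hinj, Finset.card_range]
  have hsum := Finset.sum_image (f := fun k => k) (g := fun j => (d - e * j) % s)
    (s := Finset.range s) hinj
  rw [himg] at hsum
  exact hsum.symm

lemma res_total (s e m c : ℕ) (hs : 0 < s) (hcop : Nat.Coprime e s)
    (hc : e * (m * s - 1) ≤ c) :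
    ∑ x ∈ Finset.range (m * s), (c - e * x) % s = m * ∑ j ∈ Finset.range s, j := by
  induction m with
  | zero => simp
  | succ n ih =>
    have hms : n * s ≤ (n + 1) * s := by nlinarith
    have hc' : e * (n * s - 1) ≤ c := by
      refine le_trans (Nat.mul_le_mul_left e ?_) hc
      omega
    have hsplit : ∑ x ∈ Finset.range ((n+1) * s), (c - e * x) % s
        = (∑ x ∈ Finset.range (n * s), (c - e * x) % s)
          + ∑ x ∈ Finset.Ico (n * s) ((n+1) * s), (c - e * x) % s := by
      rw [Finset.range_eq_Ico, ← Finset.sum_Ico_consecutive _ (Nat.zero_le (n * s)) hms,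
        ← Finset.range_eq_Ico]
    rw [hsplit, ih hc']
    have hIco : ∑ x ∈ Finset.Ico (n * s) ((n+1) * s), (c - e * x) % s
        = ∑ j ∈ Finset.range s, ((c - e * (n * s)) - e * j) % s := by
      rw [Finset.sum_Ico_eq_sum_range]
      have hlen : (n+1) * s - n * s = s := by
        have : (n+1) * s = n * s + s := by ring
        omega
      rw [hlen]
      refine Finset.sum_congr rfl (fun j hj => ?_)
      rw [mem_range] at hj
      have he1 : e * (n * s + j) = e * (n * s) + e * j := by ring
      have hbound : e * (n * s + j) ≤ c := by
        refine le_trans (Nat.mul_le_mul_left e ?_) hc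
        have : (n+1) * s = n * s + s := by ring
        omega
      congr 1
      rw [he1] at hbound ⊢
      omega
    rw [hIco, res_block s e _ hs hcop]
    · ring
    · have hb : e * (n * s) + e * (s - 1) ≤ c := by
        have h1 : e * (n * s) + e * (s-1) = e * (n * s + (s - 1)) := by ring
        rw [h1]
        refine le_trans (Nat.mul_le_mul_left e ?_) hc
        have : (n+1) * s = n * s + s := by ring
        omega
      omega

noncomputable def Ef (p q r s t : ℕ) : ℚ :=
  ((p : ℚ) * r * t ^ 2 + ((p : ℚ) * s + q * r + 1) * t) / (2 * q * s) + 1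

lemma Ef_swap (p q r s t : ℕ) : Ef r s p q t = Ef p q r s t := by
  unfold Ef
  ring

lemma Ef_zero (p q r s : ℕ) : Ef p q r s 0 = 1 := by
  simp [Ef]

lemma step (p q r s : ℕ) (hp : 0 < p) (hq : 0 < q) (hr : 0 < r) (hs : 0 < s)
    (h1 : s ∣ p) (h2 : p ∣ (q * r + 1)) (h3 : Nat.gcd ((q * r + 1) / p) s = 1)
    (t : ℕ) (ht : q ≤ t) :
    (cnt (q * r) (s * p) (p * r * t) : ℚ)
      = cnt (q * r) (s * p) (p * r * (t - q)) + (Ef p q r s t - Ef p q r s (t - q)) := by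
  obtain ⟨u, rfl⟩ : ∃ u, t = q + u := ⟨t - q, by omega⟩
  have hu : q + u - q = u := by omega
  rw [hu]
  obtain ⟨e, hpe⟩ := h2   -- hpe : q * r + 1 = p * e
  obtain ⟨m, hsm⟩ := h1   -- hsm : p = s * m
  have h3' : Nat.Coprime e s := by
    rwa [hpe, Nat.mul_div_cancel_left e hp] at h3
  have he1 : 0 < e := by
    rcases Nat.eq_zero_or_pos e with h | h
    · subst h; rw [Nat.mul_zero] at hpe; omega
    · exact h
  have hm1 : 0 < m := by
    rcases Nat.eq_zero_or_pos m with h | h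
    · subst h; rw [Nat.mul_zero] at hsm; omega
    · exact h
  have hA : 0 < q * r := by positivity
  have hB : 0 < s * p := by positivity
  have hrq : q * r ≤ r * (q + u) := by
    calc q * r = r * q := by ring
      _ ≤ r * (q + u) := Nat.mul_le_mul_left r (by omega)
  -- the shift decomposition
  have hNsum : p * r * (q + u) = p * r * u + p * (q * r) := by ring
  have hshift := cnt_shift (q * r) (s * p) (p * r * u) p hA
  rw [← hNsum] at hshift
  -- band terms
  have hband : ∀ x ∈ Finset.range p,
      gcol (q * r) (s * p) (p * r * (q + u)) x = (r * (q + u) - e * x) / s + 1 := by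
    intro x hx
    rw [mem_range] at hx
    have hx1 : q * r * x ≤ q * r * p := Nat.mul_le_mul_left _ (by omega)
    have hx2 : q * r * p = p * r * q := by ring
    have hx3 : p * r * q ≤ p * r * (q + u) := Nat.mul_le_mul_left _ (by omega)
    have hguard : q * r * x ≤ p * r * (q + u) := by omega
    have hex : e * x ≤ r * (q + u) := by
      have c1 : e * (x + 1) ≤ e * p := Nat.mul_le_mul_left e (by omega)
      have c2 : e * (x + 1) = e * x + e := by ring
      have c3 : e * p = p * e := by ring
      omega
    have hwk : (r * (q + u) - e * x) + e * x = r * (q + u) := by omega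
    have hnum : p * r * (q + u) - q * r * x = p * (r * (q + u) - e * x) + x := by
      have c1 : p * (r * (q + u) - e * x) + p * (e * x) = p * (r * (q + u)) := by
        rw [← Nat.mul_add, hwk]
      have c2 : p * (e * x) = q * r * x + x := by
        have d1 : p * (e * x) = (p * e) * x := by ring
        rw [d1, ← hpe]; ring
      have c3 : p * (r * (q + u)) = p * r * (q + u) := by ring
      omega
    have hdiv : (p * (r * (q + u) - e * x) + x) / (s * p) = (r * (q + u) - e * x) / s := by
      rw [Nat.mul_comm s p, ← Nat.div_div_eq_div_mul, Nat.mul_add_div hp,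
        Nat.div_eq_of_lt hx, Nat.add_zero]
    rw [gcol, if_pos hguard, hnum, hdiv]
  rw [Finset.sum_congr rfl hband] at hshift
  -- residue sum
  have hres : ∑ x ∈ Finset.range p, (r * (q + u) - e * x) % s
      = m * ∑ j ∈ Finset.range s, j := by
    have hpm : p = m * s := by rw [Nat.mul_comm]; omega
    rw [hpm]
    apply res_total s e m _ hs h3'
    have c0 : m * s - 1 = p - 1 := by omega
    rw [c0]
    have c1 : e * (p - 1) + e = e * p := by
      have d1 : e * (p - 1) + e = e * (p - 1 + 1) := by ring
      rw [d1]
      congr 1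
      omega
    have c2 : e * p = p * e := by ring
    omega
  -- divide/mod decomposition, all cast to ℚ
  have hkey1 : (s : ℚ) * (∑ x ∈ Finset.range p, ((r * (q + u) - e * x) / s : ℕ))
      + (∑ x ∈ Finset.range p, ((r * (q + u) - e * x) % s : ℕ))
      = ∑ x ∈ Finset.range p, ((r * (q + u) - e * x : ℕ) : ℚ) := by
    push_cast
    rw [Finset.mul_sum, ← Finset.sum_add_distrib]
    refine Finset.sum_congr rfl (fun x hx => ?_)
    exact_mod_cast congrArg (fun n : ℕ => (n : ℚ)) (Nat.div_add_mod (r * (q + u) - e * x) s)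
  -- abbreviations (as ℚ)
  set W : ℚ := ∑ x ∈ Finset.range p, (((r * (q + u) - e * x) / s : ℕ) : ℚ) with hWdef
  set R : ℚ := ∑ x ∈ Finset.range p, (((r * (q + u) - e * x) % s : ℕ) : ℚ) with hRdef
  set G : ℚ := ∑ x ∈ Finset.range p, (x : ℚ) with hGdef
  set J : ℚ := ∑ j ∈ Finset.range s, (j : ℚ) with hJdef
  have hexall : ∀ x ∈ Finset.range p, e * x ≤ r * (q + u) := by
    intro x hx
    rw [mem_range] at hx
    have c1 : e * (x + 1) ≤ e * p := Nat.mul_le_mul_left e (by omega)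
    have c2 : e * (x + 1) = e * x + e := by ring
    have c3 : e * p = p * e := by ring
    omega
  have hkey1' : (s : ℚ) * W + R = ∑ x ∈ Finset.range p, ((r * (q + u) - e * x : ℕ) : ℚ) := by
    rw [hWdef, hRdef]
    push_cast
    exact_mod_cast hkey1
  have hV : ∑ x ∈ Finset.range p, ((r * (q + u) - e * x : ℕ) : ℚ)
      = (p : ℚ) * (r * (q + u)) - e * G := by
    have hstep : ∀ x ∈ Finset.range p,
        ((r * (q + u) - e * x : ℕ) : ℚ) = ((r : ℚ) * (q + u)) - (e : ℚ) * x := by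
      intro x hx
      rw [Nat.cast_sub (hexall x hx)]
      push_cast
      ring
    rw [Finset.sum_congr rfl hstep, Finset.sum_sub_distrib, Finset.sum_const,
      Finset.card_range, ← Finset.mul_sum, ← hGdef]
    push_cast
    ring
  have hresQ : R = (m : ℚ) * J := by
    rw [hRdef, hJdef]
    rw [← Nat.cast_sum, ← Nat.cast_sum, hres]
    push_cast
    ring
  have hGQ : 2 * G = (p : ℚ) * ((p : ℚ) - 1) := by
    have := Finset.sum_range_id_mul_two p
    have hc := congrArg (fun n : ℕ => (n : ℚ)) this
    push_cast at hc
    rw [hGdef]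
    rw [Nat.cast_sub hp] at hc
    push_cast at hc
    linarith [hc]
  have hJQ : 2 * J = (s : ℚ) * ((s : ℚ) - 1) := by
    have := Finset.sum_range_id_mul_two s
    have hc := congrArg (fun n : ℕ => (n : ℚ)) this
    push_cast at hc
    rw [Nat.cast_sub hs] at hc
    push_cast at hc
    rw [hJdef]
    linarith [hc]
  have hpeQ : (q : ℚ) * r + 1 = (p : ℚ) * e := by exact_mod_cast congrArg (fun n : ℕ => (n : ℚ)) hpe
  have hsmQ : (p : ℚ) = (s : ℚ) * m := by exact_mod_cast congrArg (fun n : ℕ => (n : ℚ)) hsm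
  have key : 2 * (s : ℚ) * W
      = 2 * p * r * ((q : ℚ) + u) - ((q : ℚ) * r + 1) * ((p : ℚ) - 1) - (p : ℚ) * ((s : ℚ) - 1) := by
    linear_combination 2 * hkey1' + 2 * hV - 2 * hresQ - (e : ℚ) * hGQ
      + ((p : ℚ) - 1) * hpeQ - (m : ℚ) * hJQ + ((s : ℚ) - 1) * hsmQ
  have hs0 : (s : ℚ) ≠ 0 := Nat.cast_ne_zero.2 (by omega)
  have hq0 : (q : ℚ) ≠ 0 := Nat.cast_ne_zero.2 (by omega)
  have htarget : W + p = Ef p q r s (q + u) - Ef p q r s u := by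
    unfold Ef
    push_cast
    field_simp
    linear_combination (q : ℚ) * key
  rw [hshift]
  push_cast
  rw [Finset.sum_add_distrib, Finset.sum_const, Finset.card_range]
  simp only [nsmul_eq_mul, mul_one]
  have hWW : (∑ x ∈ Finset.range p, (((r * (q + u) - e * x) / s : ℕ) : ℚ)) = W := by rw [hWdef]
  push_cast at hWW
  linarith [htarget, hWW]

lemma exists_reach (q s t : ℕ) (hq : 0 < q) (hs : 0 < s) (hcop : Nat.Coprime q s) :
    ∃ a c : ℕ, t + a * q = c * s := by
  have : NeZero s := ⟨by omega⟩
  have hu : IsUnit (q : ZMod s) := (ZMod.isUnit_iff_coprime q s).2 hcop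
  obtain ⟨v, hv⟩ := hu.exists_left_inv
  refine ⟨(v * (-(t : ZMod s))).val, (t + (v * (-(t : ZMod s))).val * q) / s, ?_⟩
  have hdvd : s ∣ t + (v * (-(t : ZMod s))).val * q := by
    rw [← ZMod.natCast_eq_zero_iff]
    push_cast
    rw [ZMod.natCast_zmod_val]
    calc (t : ZMod s) + v * (-(t : ZMod s)) * q
        = (t : ZMod s) + (-(t : ZMod s)) * (v * q) := by ring
      _ = 0 := by rw [hv]; ring
  rw [Nat.div_mul_cancel hdvd]

lemma cnt_eq_Ef (p q r s : ℕ) (hp : 0 < p) (hq : 0 < q) (hr : 0 < r) (hs : 0 < s)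
    (hpq : Nat.gcd p q = 1) (hrs : Nat.gcd r s = 1)
    (h1 : s ∣ p) (h2 : p ∣ (r * q + 1)) (h3 : Nat.gcd ((r * q + 1) / p) s = 1)
    (h4 : q ∣ r) (h5 : r ∣ (s * p + 1)) (h6 : Nat.gcd ((s * p + 1) / r) q = 1) :
    ∀ t : ℕ, (cnt (q * r) (s * p) (p * r * t) : ℚ) = Ef p q r s t := by
  have hA : 0 < q * r := by positivity
  have hB : 0 < s * p := by positivity
  have h2' : p ∣ (q * r + 1) := by rw [Nat.mul_comm q r]; exact h2
  have h3' : Nat.gcd ((q * r + 1) / p) s = 1 := by rwa [Nat.mul_comm q r]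
  set f : ℕ → ℚ := fun t => (cnt (q * r) (s * p) (p * r * t) : ℚ) - Ef p q r s t with hf
  have hstepq : ∀ t : ℕ, f (t + q) = f t := by
    intro t
    have := step p q r s hp hq hr hs h1 h2' h3' (t + q) (by omega)
    rw [Nat.add_sub_cancel] at this
    simp only [hf]
    rw [this]
    ring
  have hsteps : ∀ t : ℕ, f (t + s) = f t := by
    intro t
    have H := step r s p q hr hs hp hq h4 h5 h6 (t + s) (by omega)
    rw [Nat.add_sub_cancel] at H
    have e1 : cnt (s * p) (q * r) (r * p * (t + s)) = cnt (q * r) (s * p) (p * r * (t + s)) := by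
      rw [cnt_swap (s * p) (q * r) _ hB hA]
      congr 1
      ring
    have e2 : cnt (s * p) (q * r) (r * p * t) = cnt (q * r) (s * p) (p * r * t) := by
      rw [cnt_swap (s * p) (q * r) _ hB hA]
      congr 1
      ring
    rw [e1, e2, Ef_swap p q r s (t + s), Ef_swap p q r s t] at H
    simp only [hf]
    rw [H]
    ring
  have hzero : f 0 = 0 := by
    simp only [hf]
    rw [Nat.mul_zero, cnt_zero, Ef_zero]
    norm_num
  have hmulq : ∀ a t : ℕ, f (t + a * q) = f t := by
    intro a
    induction a with
    | zero => intro t; simp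
    | succ n ih =>
      intro t
      have : t + (n + 1) * q = (t + n * q) + q := by ring
      rw [this, hstepq, ih]
  have hmuls : ∀ c : ℕ, f (c * s) = 0 := by
    intro c
    induction c with
    | zero => simpa using hzero
    | succ n ih =>
      have : (n + 1) * s = n * s + s := by ring
      rw [this, hsteps, ih]
  have hcop : Nat.Coprime q s := by
    have hqp : Nat.Coprime q p := (Nat.coprime_comm.1 hpq)
    exact hqp.coprime_dvd_right h1
  intro t
  obtain ⟨a, c, hac⟩ := exists_reach q s t hq hs hcop
  have : f t = 0 := by
    rw [← hmulq a t, hac, hmuls c]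
  simp only [hf] at this
  linarith [this]

lemma set_eq_Ftri (p q r s t : ℕ) (hp : 0 < p) (hq : 0 < q) (hr : 0 < r) (hs : 0 < s) :
    {z : ℕ × ℕ | ((q : ℝ) / p) * z.1 + ((s : ℝ) / r) * z.2 ≤ (t : ℝ)}
      = ↑(Ftri (q * r) (s * p) (p * r * t)) := by
  have hA : 0 < q * r := by positivity
  have hB : 0 < s * p := by positivity
  have hp0 : ((p : ℝ)) ≠ 0 := Nat.cast_ne_zero.2 (by omega)
  have hr0 : ((r : ℝ)) ≠ 0 := Nat.cast_ne_zero.2 (by omega)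
  have hpr : (0 : ℝ) < (p : ℝ) * (r : ℝ) := by positivity
  ext z
  obtain ⟨x, y⟩ := z
  simp only [Set.mem_setOf_eq, Finset.coe_sort_coe, Finset.mem_coe, mem_Ftri hA hB]
  have h0 : ((q * r * x + s * p * y : ℕ) : ℝ) = (q : ℝ) * x * r + (s : ℝ) * y * p := by
    push_cast; ring
  have h1 : ((p * r * t : ℕ) : ℝ) = (t : ℝ) * ((p : ℝ) * r) := by
    push_cast; ring
  rw [← @Nat.cast_le ℝ, h0, h1]
  constructor
  · intro h
    have expand : ((q : ℝ) / p * x + (s : ℝ) / r * y) * ((p : ℝ) * r)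
        = (q : ℝ) * x * r + (s : ℝ) * y * p := by
      field_simp
    calc (q : ℝ) * x * r + (s : ℝ) * y * p
        = ((q : ℝ) / p * x + (s : ℝ) / r * y) * ((p : ℝ) * r) := expand.symm
      _ ≤ (t : ℝ) * ((p : ℝ) * r) := by
          apply mul_le_mul_of_nonneg_right h (le_of_lt hpr)
  · intro h
    have expand2 : (q : ℝ) / p * x + (s : ℝ) / r * y
        = ((q : ℝ) * x * r + (s : ℝ) * y * p) / ((p : ℝ) * r) := by
      field_simp
    rw [expand2, div_le_iff₀ hpr]
    exact h


/-- Sufficient criterion for the triangle with vertices `(0,0), (p/q,0), (0,r/s)`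
to be pseudo-integral. -/
theorem stmt_12 (p q r s : ℕ) (hp : 0 < p) (hq : 0 < q) (hr : 0 < r) (hs : 0 < s)
    (hpq : Nat.gcd p q = 1) (hrs : Nat.gcd r s = 1)
    (h1 : s ∣ p) (h2 : p ∣ (r * q + 1)) (h3 : Nat.gcd ((r * q + 1) / p) s = 1)
    (h4 : q ∣ r) (h5 : r ∣ (s * p + 1)) (h6 : Nat.gcd ((s * p + 1) / r) q = 1) :
    ∃ P : Polynomial ℚ, ∀ t : ℕ, 0 < t →
      (ehrhart ((q : ℝ) / p) ((s : ℝ) / r) t : ℚ) = P.eval (t : ℚ) := by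
  have hA : 0 < q * r := by positivity
  have hB : 0 < s * p := by positivity
  refine ⟨Polynomial.C (((p : ℚ) * r) / (2 * q * s)) * Polynomial.X ^ 2
    + Polynomial.C (((p : ℚ) * s + q * r + 1) / (2 * q * s)) * Polynomial.X
    + Polynomial.C 1, fun t _ => ?_⟩
  have hcard : ehrhart ((q : ℝ) / p) ((s : ℝ) / r) t = cnt (q * r) (s * p) (p * r * t) := by
    unfold ehrhart
    rw [set_eq_Ftri p q r s t hp hq hr hs, Set.ncard_coe_finset,
      Ftri_card _ _ _ hA hB]
  rw [hcard, cnt_eq_Ef p q r s hp hq hr hs hpq hrs h1 h2 h3 h4 h5 h6 t]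
  simp only [Polynomial.eval_add, Polynomial.eval_mul, Polynomial.eval_pow,
    Polynomial.eval_C, Polynomial.eval_X]
  unfold Ef
  ring
end

section
/- For any integer p > 1, the triangle with vertices (0,0), (p,0) and (0,(p−1)/p) is pseudo-integral: its Ehrhart function #{(x,y)∈ℤ_{≥0}² : (1/p)x + (p/(p−1))y ≤ t} is a polynomial in t, even though the denominator of the triangle is p. -/
private lemma sub_key (c A B j : ℕ) (hj : j < c + 1) :
    (c+1)*A + c*j ≤ (c+1)*B ↔ A + j ≤ B := by
  constructor
  · intro h
    have h1 : (c+1)*(A+j) < (c+1)*(B+1) := by nlinarith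
    exact Nat.lt_succ_iff.mp (Nat.lt_of_mul_lt_mul_left h1)
  · intro h
    nlinarith [Nat.mul_le_mul_left (c+1) h]

private lemma cond_key (c x y t : ℕ) :
    (c+1-1)*x + (c+1)^2*y ≤ (c+1)*c*t ↔
      c*(x/(c+1)) + ((c+1)*y + x%(c+1)) ≤ c*t := by
  have hc1 : c + 1 - 1 = c := by omega
  rw [hc1]
  set p := c + 1 with hp
  obtain ⟨m, j, hj, rfl⟩ : ∃ m j, j < p ∧ x = p*m + j :=
    ⟨x / p, x % p, Nat.mod_lt _ (by omega), by
      rw [Nat.div_add_mod]⟩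
  have hdiv : (p*m + j)/p = m := by
    rw [Nat.mul_add_div (by omega), Nat.div_eq_of_lt hj, Nat.add_zero]
  have hmod : (p*m + j)%p = j := by
    rw [Nat.mul_add_mod, Nat.mod_eq_of_lt hj]
  rw [hdiv, hmod]
  have e1 : c*(p*m+j) + p^2*y = p*(c*m + p*y) + c*j := by ring
  have e2 : c*m + (p*y + j) = (c*m + p*y) + j := by ring
  rw [e1, e2, hp, Nat.mul_assoc (c+1) c t, sub_key c (c*m + (c+1)*y) (c*t) j hj]

/-- The triangle with vertices `(0,0), (p,0), (0,(p−1)/p)` is pseudo-integral. -/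
theorem stmt_13 (p : ℕ) (hp : 1 < p) :
    ∃ P : Polynomial ℚ, ∀ t : ℕ, 0 < t →
      (ehrhart (1 / (p : ℝ)) ((p : ℝ) / (p - 1)) t : ℚ) = P.eval (t : ℚ) := by
  set c := p - 1 with hc
  have hpc : c + 1 = p := by omega
  refine ⟨Polynomial.C (1/2) * ((Polynomial.X + 1) *
      (Polynomial.C (c:ℚ) * Polynomial.X + 2)), fun t _ => ?_⟩
  -- Step 1: real condition ↔ nat condition
  have hp0 : (0:ℝ) < p := by positivity
  have hp1 : (0:ℝ) < (p:ℝ) - 1 := by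
    have : (1:ℝ) < p := by exact_mod_cast hp
    linarith
  have hreal : ∀ q : ℕ × ℕ,
      (1/(p:ℝ)) * q.1 + ((p:ℝ)/((p:ℝ)-1)) * q.2 ≤ (t:ℝ) ↔
        c * q.1 + p^2 * q.2 ≤ p * c * t := by
    intro q
    have hcast : ((c:ℕ):ℝ) = (p:ℝ) - 1 := by
      rw [hc]; push_cast [Nat.cast_sub hp.le]; ring
    rw [show (c * q.1 + p^2 * q.2 ≤ p * c * t) ↔
        ((c * q.1 + p^2 * q.2 : ℕ) : ℝ) ≤ ((p * c * t : ℕ) : ℝ) from (Nat.cast_le).symm]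
    push_cast [hcast]
    constructor
    · intro h
      have h2 := mul_le_mul_of_nonneg_left h (le_of_lt (mul_pos hp0 hp1))
      calc ((p:ℝ)-1) * q.1 + (p:ℝ)^2 * q.2
          = (p * ((p:ℝ)-1)) * ((1/(p:ℝ)) * q.1 + ((p:ℝ)/((p:ℝ)-1)) * q.2) := by
            field_simp
        _ ≤ (p * ((p:ℝ)-1)) * t := h2
        _ = (p:ℝ) * ((p:ℝ)-1) * t := by ring
    · intro h
      have h2 := mul_le_mul_of_nonneg_left h
        (le_of_lt (inv_pos.mpr (mul_pos hp0 hp1)))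
      calc (1/(p:ℝ)) * q.1 + ((p:ℝ)/((p:ℝ)-1)) * q.2
          = ((p:ℝ) * (((p:ℝ)-1)))⁻¹ * (((p:ℝ)-1) * q.1 + (p:ℝ)^2 * q.2) := by
            field_simp
        _ ≤ ((p:ℝ) * (((p:ℝ)-1)))⁻¹ * ((p:ℝ) * ((p:ℝ)-1) * t) := h2
        _ = (t:ℝ) := by field_simp
  have hp0' : 0 < p := by omega
  have hcpos : 0 < c := by omega
  -- the bijection g
  set g : ℕ × ℕ → ℕ × ℕ := fun q => (p * q.1 + q.2 % p, q.2 / p) with hg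
  have hginj : Function.Injective g := by
    rintro ⟨m, w⟩ ⟨m', w'⟩ hab
    simp only [hg, Prod.mk.injEq] at hab
    obtain ⟨h1, h2⟩ := hab
    have ha : w % p < p := Nat.mod_lt _ hp0'
    have hb : w' % p < p := Nat.mod_lt _ hp0'
    have hm : m = m' := by
      have e1 : (p * m + w % p) / p = m := by
        rw [Nat.mul_add_div hp0', Nat.div_eq_of_lt ha, Nat.add_zero]
      have e2 : (p * m' + w' % p) / p = m' := by
        rw [Nat.mul_add_div hp0', Nat.div_eq_of_lt hb, Nat.add_zero]
      rw [← e1, ← e2, h1]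
    subst hm
    have hmod : w % p = w' % p := Nat.add_left_cancel h1
    have : w = w' := by
      conv_lhs => rw [← Nat.div_add_mod w p]
      conv_rhs => rw [← Nat.div_add_mod w' p]
      rw [h2, hmod]
    simp [this]
  -- the usable form of cond_key
  have ck : ∀ x y : ℕ, (c*x + p^2*y ≤ p*c*t ↔
      c*(x/p) + (p*y + x%p) ≤ c*t) := by
    intro x y
    have h := cond_key c x y t
    rw [hpc] at h
    rwa [show p - 1 = c by omega] at h
  -- image description
  have hset2 : {q : ℕ × ℕ | c * q.1 + p^2 * q.2 ≤ p * c * t} =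
      g '' {q : ℕ × ℕ | c * q.1 + q.2 ≤ c * t} := by
    ext ⟨x, y⟩
    simp only [Set.mem_setOf_eq, Set.mem_image, Prod.exists, hg, Prod.mk.injEq]
    constructor
    · intro h
      refine ⟨x / p, p * y + x % p, ?_, ?_, ?_⟩
      · exact (ck x y).mp h
      · have h1 : (p * y + x % p) % p = x % p := by
          rw [Nat.mul_add_mod, Nat.mod_eq_of_lt (Nat.mod_lt _ hp0')]
        rw [h1, Nat.div_add_mod]
      · rw [Nat.mul_add_div hp0', Nat.div_eq_of_lt (Nat.mod_lt _ hp0'), Nat.add_zero]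
    · rintro ⟨m, w, hmem, rfl, rfl⟩
      refine (ck _ _).mpr ?_
      have e1 : (p * m + w % p) / p = m := by
        rw [Nat.mul_add_div hp0', Nat.div_eq_of_lt (Nat.mod_lt _ hp0'), Nat.add_zero]
      have e2 : (p * m + w % p) % p = w % p := by
        rw [Nat.mul_add_mod, Nat.mod_eq_of_lt (Nat.mod_lt _ hp0')]
      rw [e1, e2, Nat.div_add_mod]
      exact hmem
  -- the simple set as a finset
  set F : Finset (ℕ × ℕ) :=
    (Finset.range (t+1) ×ˢ Finset.range (c*t+1)).filter
      (fun q => c * q.1 + q.2 ≤ c * t) with hF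
  have hset3 : {q : ℕ × ℕ | c * q.1 + q.2 ≤ c * t} = ↑F := by
    ext ⟨m, w⟩
    simp only [Set.mem_setOf_eq, hF, Finset.coe_filter, Finset.mem_product,
      Finset.mem_range]
    constructor
    · intro h
      have hm : m ≤ t := Nat.le_of_mul_le_mul_left
        (le_trans (Nat.le_add_right _ _) h) hcpos
      have hw : w ≤ c * t := le_trans (Nat.le_add_left _ _) h
      exact ⟨⟨by omega, by omega⟩, h⟩
    · exact fun h => h.2
  -- counting F
  have hFcard : F.card = ∑ m ∈ Finset.range (t+1), (c*(t-m)+1) := by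
    rw [hF, Finset.card_filter, Finset.sum_product]
    refine Finset.sum_congr rfl fun m hm => ?_
    have hm' : m ≤ t := Nat.lt_succ_iff.mp (Finset.mem_range.mp hm)
    rw [← Finset.card_filter]
    have hsub : c*(t-m) + c*m = c*t := by
      rw [← Nat.mul_add, Nat.sub_add_cancel hm']
    have hfil : (Finset.range (c*t+1)).filter (fun w => c * m + w ≤ c * t) =
        Finset.range (c*(t-m)+1) := by
      ext w
      simp only [Finset.mem_filter, Finset.mem_range]
      constructor
      · rintro ⟨_, h2⟩
        have : w ≤ c*(t-m) := by omega
        omega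
      · intro h
        have h' : w ≤ c*(t-m) := Nat.lt_succ_iff.mp h
        constructor
        · omega
        · omega
    rw [hfil, Finset.card_range]
  have hsum : ∑ m ∈ Finset.range (t+1), (c*(t-m)+1) =
      ∑ k ∈ Finset.range (t+1), (c*k+1) := by
    simpa using (Finset.sum_range_reflect (fun k => c*k+1) (t+1))
  have hgauss : ∀ n : ℕ, 2 * ∑ k ∈ Finset.range (n+1), (c*k+1) = (n+1)*(c*n+2) := by
    intro n
    induction n with
    | zero => simp
    | succ n ih =>
      rw [Finset.sum_range_succ, Nat.mul_add, ih]
      ring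
  -- assemble
  have hE : 2 * ehrhart (1 / (p : ℝ)) ((p : ℝ) / ((p:ℝ) - 1)) t = (t+1)*(c*t+2) := by
    have : ehrhart (1 / (p : ℝ)) ((p : ℝ) / ((p:ℝ) - 1)) t = F.card := by
      rw [ehrhart]
      have hsets : {q : ℕ × ℕ | (1/(p:ℝ)) * q.1 + ((p:ℝ)/((p:ℝ)-1)) * q.2 ≤ (t:ℝ)} =
          {q : ℕ × ℕ | c * q.1 + p^2 * q.2 ≤ p * c * t} := Set.ext fun q => hreal q
      rw [hsets, hset2, Set.ncard_image_of_injective _ hginj, hset3,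
        Set.ncard_coe_finset]
    rw [this, hFcard, hsum, hgauss t]
  have hE' : (2 : ℚ) * (ehrhart (1 / (p : ℝ)) ((p : ℝ) / ((p:ℝ) - 1)) t : ℚ) =
      ((t:ℚ)+1)*((c:ℚ)*t+2) := by
    have := congrArg (fun n : ℕ => (n : ℚ)) hE
    push_cast at this
    linarith [this]
  simp only [Polynomial.eval_mul, Polynomial.eval_add, Polynomial.eval_C,
    Polynomial.eval_X, Polynomial.eval_one, Polynomial.eval_ofNat]
  linarith [hE']
end

section
/- Let p, q be relatively prime positive integers such that p | (q²+1) and gcd((q²+1)/p, p) = 1. Then q is a period of the Ehrhart quasipolynomial of the triangle with vertices (0,0), (p/q,0), (0,q/p). -/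
open Finset

section aux

def ehrN (p q S : ℕ) : ℕ := ∑ x ∈ range (S / q ^ 2 + 1), ((S - q ^ 2 * x) / p ^ 2 + 1)

def ehrH (p q t : ℕ) : ℕ := ∑ x ∈ range p, ((p * q * (t + q) - q ^ 2 * x) / p ^ 2 + 1)

lemma ehrhart_eq (p q : ℕ) (hp : 0 < p) (hq : 0 < q) (t : ℕ) :
    ehrhart ((q : ℝ) / p) ((p : ℝ) / q) t = ehrN p q (p * q * t) := by
  classical
  have hq2 : 0 < q ^ 2 := pow_pos hq 2
  have hp2 : 0 < p ^ 2 := pow_pos hp 2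
  set G : Finset (ℕ × ℕ) :=
    (range (p * q * t / q ^ 2 + 1)).biUnion
      (fun x => (range ((p * q * t - q ^ 2 * x) / p ^ 2 + 1)).image (fun y => (x, y))) with hG
  have hset : {z : ℕ × ℕ | (q : ℝ) / p * z.1 + (p : ℝ) / q * z.2 ≤ t} = ↑G := by
    ext ⟨x, y⟩
    have hcond : ((q : ℝ) / p * x + (p : ℝ) / q * y ≤ t) ↔
        q ^ 2 * x + p ^ 2 * y ≤ p * q * t := by
      have hp' : (p : ℝ) ≠ 0 := by positivity
      have hq' : (q : ℝ) ≠ 0 := by positivity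
      rw [show ((q : ℝ) / p * x + (p : ℝ) / q * y ≤ t) ↔
          ((q ^ 2 * x + p ^ 2 * y : ℕ) : ℝ) ≤ ((p * q * t : ℕ) : ℝ) from ?_, Nat.cast_le]
      push_cast
      rw [div_mul_eq_mul_div, div_mul_eq_mul_div, div_add_div _ _ hp' hq',
        div_le_iff₀ (by positivity)]
      constructor <;> intro h <;> nlinarith
    simp only [Set.mem_setOf_eq, mem_coe, hG, mem_biUnion, mem_image, mem_range, hcond]
    have hc1 := Nat.mul_comm x (q ^ 2)
    have hc2 := Nat.mul_comm y (p ^ 2)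
    constructor
    · intro h
      refine ⟨x, ?_, y, ?_, rfl⟩
      · have : x ≤ p * q * t / q ^ 2 := (Nat.le_div_iff_mul_le hq2).2 (by omega)
        omega
      · have : y ≤ (p * q * t - q ^ 2 * x) / p ^ 2 := (Nat.le_div_iff_mul_le hp2).2 (by omega)
        omega
    · rintro ⟨u, hu, v, hv, he⟩
      rw [Prod.mk.injEq] at he
      obtain ⟨h1, h2⟩ := he
      subst h1; subst h2
      have hx2 : u * q ^ 2 ≤ p * q * t := (Nat.le_div_iff_mul_le hq2).1 (by omega)
      have hy2 : v * p ^ 2 ≤ p * q * t - q ^ 2 * u := (Nat.le_div_iff_mul_le hp2).1 (by omega)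
      have hc3 := Nat.mul_comm u (q ^ 2)
      have hc4 := Nat.mul_comm v (p ^ 2)
      omega
  have hcard : G.card = ehrN p q (p * q * t) := by
    rw [hG, card_biUnion]
    · refine sum_congr rfl fun x _ => ?_
      rw [card_image_of_injective _ (fun a b h => by simpa using h), card_range]
    · intro a _ b _ hab
      simp only [disjoint_left, mem_image, mem_range]
      rintro ⟨u, v⟩ ⟨y, hy, he⟩ ⟨y', hy', he'⟩
      rw [Prod.mk.injEq] at he he'
      exact hab (he.1.trans he'.1.symm)
  rw [ehrhart, hset, Set.ncard_coe_finset, hcard]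

lemma ehrN_shift (p q : ℕ) (hq : 0 < q) (t : ℕ) :
    ehrN p q (p * q * (t + q)) = ehrH p q t + ehrN p q (p * q * t) := by
  have hq2 : 0 < q ^ 2 := pow_pos hq 2
  have hdiv : p * q * (t + q) / q ^ 2 + 1 = p + (p * q * t / q ^ 2 + 1) := by
    rw [show p * q * (t + q) = p * q * t + p * q ^ 2 by ring, Nat.add_mul_div_right _ _ hq2]
    ring
  rw [ehrN, hdiv, Finset.sum_range_add]
  congr 1
  rw [ehrN]
  refine sum_congr rfl fun x hx => ?_
  simp only [mem_range] at hx
  have hxle : x * q ^ 2 ≤ p * q * t := (Nat.le_div_iff_mul_le hq2).1 (by omega)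
  congr 2
  have h1 : q ^ 2 * (p + x) = p * q ^ 2 + q ^ 2 * x := by ring
  have h2 : q ^ 2 * x = x * q ^ 2 := by ring
  have h3 : p * q * (t + q) = p * q * t + p * q ^ 2 := by ring
  omega

lemma key_emod (p q m : ℕ) (hp : 0 < p) (hm : (p : ℤ) * m = (q : ℤ) ^ 2 + 1)
    (a : ℤ) (x : ℕ) (hx : x < p) :
    (a * p * q - (q : ℤ) ^ 2 * x) % ((p : ℤ) ^ 2) =
      (x : ℤ) + p * ((a * q - (m : ℤ) * x) % p) := by
  have hp' : (0 : ℤ) < p := by exact_mod_cast hp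
  have hw0 : 0 ≤ (a * q - (m : ℤ) * x) % p := Int.emod_nonneg _ (ne_of_gt hp')
  have hwp : (a * q - (m : ℤ) * x) % p < p := Int.emod_lt_of_pos _ hp'
  have hdm := Int.mul_ediv_add_emod (a * q - (m : ℤ) * x) p
  have key : a * p * q - (q : ℤ) ^ 2 * x =
      ((x : ℤ) + p * ((a * q - (m : ℤ) * x) % p)) + (p : ℤ) ^ 2 * ((a * q - (m : ℤ) * x) / p) := by
    linear_combination (-(p : ℤ)) * hdm + (x : ℤ) * hm
  rw [key, Int.add_mul_emod_self_left]
  refine Int.emod_eq_of_lt (by positivity) ?_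
  have hx' : (x : ℤ) < p := by exact_mod_cast hx
  nlinarith

lemma sum_emod_bij (p m : ℕ) (hp : 0 < p) (hcop : Nat.Coprime m p) (c : ℤ) :
    ∑ x ∈ range p, ((c - (m : ℤ) * x) % p) = ∑ x ∈ range p, (x : ℤ) := by
  classical
  have hp' : (0 : ℤ) < p := by exact_mod_cast hp
  set g : ℕ → ℕ := fun x => ((c - (m : ℤ) * x) % p).toNat with hgdef
  have hg : ∀ x : ℕ, (g x : ℤ) = (c - (m : ℤ) * x) % p := fun x =>
    Int.toNat_of_nonneg (Int.emod_nonneg _ (ne_of_gt hp'))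
  have hglt : ∀ x : ℕ, g x < p := by
    intro x
    have h1 := Int.emod_lt_of_pos (c - (m : ℤ) * x) hp'
    have h2 := hg x
    omega
  have hinj : ∀ x ∈ range p, ∀ y ∈ range p, g x = g y → x = y := by
    intro x hx y hy hgg
    simp only [mem_range] at hx hy
    have h5 : (c - (m : ℤ) * x) % p = (c - (m : ℤ) * y) % p := by
      rw [← hg, ← hg, hgg]
    have h6 : (p : ℤ) ∣ (c - (m : ℤ) * y) - (c - (m : ℤ) * x) := (Int.ModEq.dvd h5)
    have h6' : (p : ℤ) ∣ (m : ℤ) * ((x : ℤ) - y) := by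
      have : (m : ℤ) * ((x : ℤ) - y) = (c - (m : ℤ) * y) - (c - (m : ℤ) * x) := by ring
      rw [this]; exact h6
    have h7 : (p : ℤ) ∣ ((x : ℤ) - y) :=
      (Nat.isCoprime_iff_coprime.2 hcop.symm).dvd_of_dvd_mul_left h6'
    have h8 : ((x : ℤ) - y) = 0 := Int.eq_zero_of_abs_lt_dvd h7 (by rw [abs_lt]; omega)
    omega
  have himg : image g (range p) = range p := by
    apply Finset.eq_of_subset_of_card_le
    · intro y hy
      simp only [mem_image] at hy
      obtain ⟨x, _, rfl⟩ := hy
      exact mem_range.2 (hglt x)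
    · rw [Finset.card_image_of_injOn (fun x hx y hy => hinj x hx y hy)]
  calc ∑ x ∈ range p, ((c - (m : ℤ) * x) % p) = ∑ x ∈ range p, ((g x : ℤ)) :=
        sum_congr rfl fun x _ => (hg x).symm
    _ = ∑ y ∈ image g (range p), (y : ℤ) := (Finset.sum_image hinj).symm
    _ = ∑ x ∈ range p, (x : ℤ) := by rw [himg]

lemma resid_sum (p q m : ℕ) (hp : 0 < p) (hcop : Nat.Coprime m p)
    (hm : (p : ℤ) * m = (q : ℤ) ^ 2 + 1) (a : ℤ) :
    ∑ x ∈ range p, ((a * p * q - (q : ℤ) ^ 2 * x) % ((p : ℤ) ^ 2)) =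
      (1 + (p : ℤ)) * ∑ x ∈ range p, (x : ℤ) := by
  rw [sum_congr rfl fun x hx => key_emod p q m hp hm a x (mem_range.1 hx),
    Finset.sum_add_distrib, ← Finset.mul_sum, sum_emod_bij p m hp hcop (a * q)]
  ring


lemma ehrH_cast (p q : ℕ) (hp : 0 < p) (hq : 0 < q) (s : ℕ) :
    (ehrH p q s : ℤ) =
      ∑ x ∈ range p, ((((s : ℤ) + q) * p * q - (q : ℤ) ^ 2 * x) / ((p : ℤ) ^ 2) + 1) := by
  rw [ehrH]
  push_cast
  refine sum_congr rfl fun x hx => ?_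
  rw [mem_range] at hx
  have h1 : q ^ 2 * x ≤ q ^ 2 * p := Nat.mul_le_mul_left _ (le_of_lt hx)
  have h2 : q ^ 2 * p = p * q * q := by ring
  have h3 : p * q * q ≤ p * q * (s + q) := Nat.mul_le_mul_left _ (by omega)
  have hle : q ^ 2 * x ≤ p * q * (s + q) := by omega
  rw [Nat.cast_sub hle]
  push_cast
  ring_nf


lemma ehrH_succ (p q m : ℕ) (hp : 0 < p) (hq : 0 < q) (hcop : Nat.Coprime m p)
    (hm : (p : ℤ) * m = (q : ℤ) ^ 2 + 1) (t : ℕ) :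
    ehrH p q (t + 1) = ehrH p q t + q := by
  have hp2 : ((p : ℤ) ^ 2) ≠ 0 := by positivity
  have key : (p : ℤ) ^ 2 * (ehrH p q (t + 1) : ℤ) = (p : ℤ) ^ 2 * ((ehrH p q t : ℤ) + q) := by
    rw [ehrH_cast p q hp hq (t + 1), ehrH_cast p q hp hq t, mul_add, Finset.mul_sum,
      Finset.mul_sum]
    have hdm : ∀ n : ℤ, (p : ℤ) ^ 2 * (n / (p : ℤ) ^ 2 + 1) = n - n % ((p : ℤ) ^ 2) + (p : ℤ) ^ 2 := by
      intro n
      have h := Int.mul_ediv_add_emod n ((p : ℤ) ^ 2)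
      linear_combination h
    rw [sum_congr rfl fun x (_ : x ∈ range p) => hdm _,
      sum_congr rfl fun x (_ : x ∈ range p) => hdm _]
    have r1 := resid_sum p q m hp hcop hm (((t + 1 : ℕ) : ℤ) + q)
    have r2 := resid_sum p q m hp hcop hm ((t : ℤ) + q)
    have e : ∀ a : ℤ, ∑ x ∈ range p,
        ((a * p * q - (q : ℤ) ^ 2 * x) - (a * p * q - (q : ℤ) ^ 2 * x) % ((p : ℤ) ^ 2)
          + (p : ℤ) ^ 2) =
        (∑ x ∈ range p, (a * p * q - (q : ℤ) ^ 2 * x))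
          - (∑ x ∈ range p, ((a * p * q - (q : ℤ) ^ 2 * x) % ((p : ℤ) ^ 2)))
          + p * (p : ℤ) ^ 2 := by
      intro a
      rw [Finset.sum_add_distrib, Finset.sum_sub_distrib, Finset.sum_const, card_range,
        nsmul_eq_mul]
    rw [e (((t + 1 : ℕ) : ℤ) + q), e ((t : ℤ) + q), r1, r2]
    have hAB : ∑ x ∈ range p, ((((t + 1 : ℕ) : ℤ) + q) * p * q - (q : ℤ) ^ 2 * x) =
        (∑ x ∈ range p, (((t : ℤ) + q) * p * q - (q : ℤ) ^ 2 * x)) + (p : ℤ) ^ 2 * q := by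
      rw [sum_congr rfl fun x (_ : x ∈ range p) =>
        (show ((((t + 1 : ℕ) : ℤ) + q) * p * q - (q : ℤ) ^ 2 * x) =
          ((((t : ℤ) + q) * p * q - (q : ℤ) ^ 2 * x)) + p * q by push_cast; ring),
        Finset.sum_add_distrib, Finset.sum_const, card_range, nsmul_eq_mul]
      ring
    rw [hAB]
    ring
  have := mul_left_cancel₀ hp2 key
  exact_mod_cast this

lemma ehrH_lin (p q m : ℕ) (hp : 0 < p) (hq : 0 < q) (hcop : Nat.Coprime m p)
    (hm : (p : ℤ) * m = (q : ℤ) ^ 2 + 1) (t : ℕ) :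
    ehrH p q t = ehrH p q 0 + q * t := by
  induction t with
  | zero => simp
  | succ n ih => rw [ehrH_succ p q m hp hq hcop hm n, ih]; ring

/-- If `p ∣ q²+1` and `gcd((q²+1)/p, p) = 1` then `q` is a period of the
Ehrhart quasipolynomial of the triangle with vertices `(0,0),(p/q,0),(0,q/p)`. -/
theorem stmt_14 (p q : ℕ) (hp : 0 < p) (hq : 0 < q) (hpq : Nat.gcd p q = 1)
    (h1 : p ∣ (q ^ 2 + 1)) (h2 : Nat.gcd ((q ^ 2 + 1) / p) p = 1) :
    ∃ A B : ℚ, ∃ c : ℕ → ℚ, (∀ t : ℕ, c (t + q) = c t) ∧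
      ∀ t : ℕ, 0 < t →
        (ehrhart ((q : ℝ) / p) ((p : ℝ) / q) t : ℚ) = A * t ^ 2 + B * t + c t := by
  set m := (q ^ 2 + 1) / p with hmdef
  have hm : (p : ℤ) * m = (q : ℤ) ^ 2 + 1 := by
    have h := Nat.mul_div_cancel' h1
    exact_mod_cast h
  have hcop : Nat.Coprime m p := h2
  have hq' : (q : ℚ) ≠ 0 := by positivity
  refine ⟨1/2, (ehrH p q 0 : ℚ)/q - q/2,
    fun t => (ehrN p q (p * q * t) : ℚ) - t ^ 2/2 - ((ehrH p q 0 : ℚ)/q - q/2) * t, ?_, ?_⟩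
  · intro t
    have h5 : ehrN p q (p * q * (t + q)) = (ehrH p q 0 + q * t) + ehrN p q (p * q * t) := by
      rw [ehrN_shift p q hq t, ehrH_lin p q m hp hq hcop hm t]
    simp only
    push_cast [h5]
    field_simp
    ring
  · intro t _
    rw [ehrhart_eq p q hp hq t]
    push_cast
    ring
end aux
end

section
/- Fix k ≥ 1 and let F_n denote the k-Fibonacci numbers (F_0=0, F_1=1, F_n = kF_{n−1}+F_{n−2}). For even n ≥ 2, setting (p,q) = (F_{n−1}, F_n), we have gcd(p,q) = 1, p | (q²+1), and gcd((q²+1)/p, p) = 1; the same holds for (p,q) = (F_{n+1}, F_n). -/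
/-- For even `n ≥ 2`, consecutive `k`-Fibonacci numbers satisfy the period
collapse criterion. -/
theorem stmt_17 (k : ℕ) (hk : 1 ≤ k) (F : ℕ → ℕ)
    (h0 : F 0 = 0) (h1 : F 1 = 1)
    (hrec : ∀ n, F (n + 2) = k * F (n + 1) + F n)
    (n : ℕ) (hn : 2 ≤ n) (hev : Even n) :
    (Nat.gcd (F (n - 1)) (F n) = 1 ∧ F (n - 1) ∣ (F n ^ 2 + 1) ∧
      Nat.gcd ((F n ^ 2 + 1) / F (n - 1)) (F (n - 1)) = 1) ∧
    (Nat.gcd (F (n + 1)) (F n) = 1 ∧ F (n + 1) ∣ (F n ^ 2 + 1) ∧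
      Nat.gcd ((F n ^ 2 + 1) / F (n + 1)) (F (n + 1)) = 1) := by
  -- positivity
  have hpos : ∀ m, 1 ≤ F (m + 1) := by
    intro m
    induction m with
    | zero => simp [h1]
    | succ m ih =>
      have h := hrec m
      nlinarith
  -- coprimality of consecutive terms
  have hgcd : ∀ m, Nat.gcd (F m) (F (m + 1)) = 1 := by
    intro m
    induction m with
    | zero => simp [h0, h1]
    | succ m ih =>
      rw [hrec, show k * F (m + 1) + F m = F m + k * F (m + 1) by ring,
        Nat.gcd_add_mul_right_right, Nat.gcd_comm]
      exact ih
  -- F(2m) ≡ 0, F(2m+1) ≡ 1 mod k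
  have hmod : ∀ m, (∃ a, F (2 * m) = k * a) ∧ (∃ b, F (2 * m + 1) = k * b + 1) := by
    intro m
    induction m with
    | zero => exact ⟨⟨0, by simpa using h0⟩, ⟨0, by simpa using h1⟩⟩
    | succ m ih =>
      obtain ⟨⟨a, ha⟩, ⟨b, hb⟩⟩ := ih
      constructor
      · exact ⟨F (2 * m + 1) + a, by
          rw [show 2 * (m + 1) = 2 * m + 2 by ring, hrec, ha]; ring⟩
      · refine ⟨k * F (2 * m + 1) + k * a + b, ?_⟩
        rw [show 2 * (m + 1) + 1 = (2 * m + 1) + 2 by ring, hrec,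
          show (2 * m + 1 + 1) = 2 * m + 2 by ring, hrec, ha, hb]; ring
  -- Cassini
  have hcas : ∀ m, (F (m + 1) : ℤ) ^ 2 - F m * F (m + 2) = (-1) ^ m := by
    intro m
    induction m with
    | zero => simp [h0, h1]
    | succ m ih =>
      have h3 : (F (m + 1 + 2) : ℤ) = k * F (m + 2) + F (m + 1) := by
        exact_mod_cast congrArg (Nat.cast (R := ℤ)) (hrec (m + 1))
      have h2 : (F (m + 2) : ℤ) = k * F (m + 1) + F m := by
        exact_mod_cast congrArg (Nat.cast (R := ℤ)) (hrec m)
      linear_combination (-(F (m + 1) : ℤ)) * h3 - ih + (F (m + 2) : ℤ) * h2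
  obtain ⟨m, hm⟩ : ∃ m, n = 2 * m + 2 := by
    obtain ⟨j, hj⟩ := hev; exact ⟨j - 1, by omega⟩
  subst hm
  rw [show 2 * m + 2 - 1 = 2 * m + 1 from by omega,
    show 2 * m + 2 + 1 = 2 * m + 3 from by omega]
  set A := F (2 * m + 1) with hAdef
  set B := F (2 * m + 2) with hBdef
  set C := F (2 * m + 3) with hCdef
  have hApos : 1 ≤ A := hpos _
  have hCpos : 1 ≤ C := hpos _
  have hrecC : C = k * B + A := hrec (2 * m + 1)
  -- key identity A * C = B^2 + 1
  have hkey : A * C = B ^ 2 + 1 := by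
    have := hcas (2 * m + 1)
    have heven : ((-1 : ℤ)) ^ (2 * m + 1) = -1 := by
      rw [pow_succ, pow_mul]; simp
    rw [heven] at this
    have : (A : ℤ) * C = (B : ℤ) ^ 2 + 1 := by
      linarith
    exact_mod_cast this
  -- coprimality with k
  obtain ⟨b, hb⟩ := (hmod m).2
  have hb' : A = k * b + 1 := hb
  have hAk : Nat.Coprime A k := by
    rw [Nat.Coprime, hb', Nat.gcd_comm, show k * b + 1 = 1 + b * k from by ring,
      Nat.gcd_add_mul_right_right]
    simp
  have hAB : Nat.Coprime A B := hgcd (2 * m + 1)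
  have hCA : Nat.Coprime C A := by
    rw [hrecC]
    have : Nat.Coprime A (k * B) :=
      Nat.Coprime.mul_right hAk hAB
    have h2 : Nat.Coprime A (k * B + A) := by
      rwa [Nat.coprime_add_self_right]
    exact h2.symm
  have hBC : Nat.Coprime B C := hgcd (2 * m + 2)
  have hdiv1 : (B ^ 2 + 1) / A = C := by
    rw [← hkey, Nat.mul_div_cancel_left _ (by omega)]
  have hdiv2 : (B ^ 2 + 1) / C = A := by
    rw [← hkey, Nat.mul_div_cancel _ (by omega)]
  refine ⟨⟨hAB, ⟨C, hkey.symm⟩, ?_⟩, ⟨hBC.symm, ⟨A, by rw [← hkey]; ring⟩, ?_⟩⟩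
  · rw [hdiv1]; exact hCA
  · rw [hdiv2]; exact hCA.symm
end

section
/- Suppose the triangle with vertices (0,0), (a,0), (0,b) (a,b positive reals) has Ehrhart function (t+1)² for all positive integers t. Then the tetrahedron with vertices (0,0,0), (1/2,0,0), (0,a,0), (0,0,b) has Ehrhart function f(t) = t³/6 + t² + 11t/6 + 1 for all positive integers t. -/
noncomputable def ehrhart2 (u v : ℝ) (t : ℕ) : ℕ :=
  {p : ℕ × ℕ | u * p.1 + v * p.2 ≤ t}.ncard

noncomputable def ehrhart3 (a b c : ℝ) (t : ℕ) : ℕ :=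
  {p : ℕ × ℕ × ℕ | a * p.1 + b * p.2.1 + c * p.2.2 ≤ t}.ncard

lemma sum_odd_sq (k : ℕ) :
    6 * ∑ x ∈ Finset.range (k+1), (2*x+1)^2 = (2*k+1)*(2*k+2)*(2*k+3) := by
  induction k with
  | zero => norm_num
  | succ n ih =>
    rw [Finset.sum_range_succ, Nat.mul_add, ih]
    ring

lemma sum_even_sq (k : ℕ) :
    6 * ∑ x ∈ Finset.range (k+1), (2*x+2)^2 = (2*k+2)*(2*k+3)*(2*k+4) := by
  induction k with
  | zero => norm_num
  | succ n ih =>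
    rw [Finset.sum_range_succ, Nat.mul_add, ih]
    ring

lemma key_sum (t : ℕ) :
    6 * ∑ x ∈ Finset.range (t/2+1), (t - 2*x + 1)^2
      = t^3 + 6*t^2 + 11*t + 6 := by
  obtain ⟨k, hk | hk⟩ := Nat.even_or_odd' t
  · subst hk
    have hdiv : 2*k/2 = k := by omega
    rw [hdiv]
    have h1 : ∑ x ∈ Finset.range (k+1), (2*k - 2*x + 1)^2
        = ∑ x ∈ Finset.range (k+1), (2*(k+1-1-x)+1)^2 := by
      refine Finset.sum_congr rfl ?_
      intro x hx
      simp only [Finset.mem_range] at hx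
      congr 1
      omega
    rw [h1, Finset.sum_range_reflect (fun x => (2*x+1)^2) (k+1), sum_odd_sq]
    ring
  · subst hk
    have hdiv : (2*k+1)/2 = k := by omega
    rw [hdiv]
    have h1 : ∑ x ∈ Finset.range (k+1), (2*k+1 - 2*x + 1)^2
        = ∑ x ∈ Finset.range (k+1), (2*(k+1-1-x)+2)^2 := by
      refine Finset.sum_congr rfl ?_
      intro x hx
      simp only [Finset.mem_range] at hx
      congr 1
      omega
    rw [h1, Finset.sum_range_reflect (fun x => (2*x+2)^2) (k+1), sum_even_sq]
    ring

/-- If the triangle with vertices `(0,0),(a,0),(0,b)` has Ehrhart polynomial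
`(t+1)²`, then the tetrahedron with vertices `(0,0,0),(1/2,0,0),(0,a,0),(0,0,b)`
has Ehrhart polynomial `t³/6 + t² + 11t/6 + 1`. -/
theorem stmt_18 (a b : ℝ) (ha : 0 < a) (hb : 0 < b)
    (htri : ∀ t : ℕ, 0 < t → ehrhart2 (1 / a) (1 / b) t = (t + 1) ^ 2) :
    ∀ t : ℕ, 0 < t →
      6 * ehrhart3 2 (1 / a) (1 / b) t = t ^ 3 + 6 * t ^ 2 + 11 * t + 6 := by
  have ha' : 0 < 1 / a := by positivity
  have hb' : 0 < 1 / b := by positivity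
  -- ehrhart2 at 0 equals 1
  have h0 : ehrhart2 (1 / a) (1 / b) 0 = 1 := by
    have hset : {p : ℕ × ℕ | (1/a) * p.1 + (1/b) * p.2 ≤ (0:ℕ)} = {((0:ℕ),(0:ℕ))} := by
      ext ⟨x, y⟩
      simp only [Set.mem_setOf_eq, Set.mem_singleton_iff, Prod.mk.injEq, Nat.cast_zero]
      constructor
      · intro h
        have hx : (0:ℝ) ≤ (1/a) * x := by positivity
        have hy : (0:ℝ) ≤ (1/b) * y := by positivity
        have hx0 : (1/a) * (x:ℝ) = 0 := by linarith
        have hy0 : (1/b) * (y:ℝ) = 0 := by linarith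
        have : (x:ℝ) = 0 := by
          rcases mul_eq_zero.mp hx0 with h | h
          · exact absurd h (ne_of_gt ha')
          · exact h
        have hy' : (y:ℝ) = 0 := by
          rcases mul_eq_zero.mp hy0 with h | h
          · exact absurd h (ne_of_gt hb')
          · exact h
        exact ⟨Nat.cast_injective (by exact_mod_cast this), Nat.cast_injective (by exact_mod_cast hy')⟩
      · rintro ⟨rfl, rfl⟩
        norm_num
    rw [ehrhart2, hset, Set.ncard_singleton]
  have htri' : ∀ s : ℕ, ehrhart2 (1 / a) (1 / b) s = (s + 1) ^ 2 := by
    intro s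
    rcases Nat.eq_zero_or_pos s with rfl | hs
    · simpa using h0
    · exact htri s hs
  -- finiteness of the 2d sets
  have hfin : ∀ s : ℕ, {p : ℕ × ℕ | (1/a) * p.1 + (1/b) * p.2 ≤ (s:ℝ)}.Finite := by
    intro s
    apply Set.finite_of_ncard_ne_zero
    have : ehrhart2 (1/a) (1/b) s = (s+1)^2 := htri' s
    rw [ehrhart2] at this
    rw [this]
    positivity
  intro t ht
  -- the 3d set as a finset
  set S := {p : ℕ × ℕ × ℕ | 2 * (p.1:ℝ) + (1/a) * p.2.1 + (1/b) * p.2.2 ≤ (t:ℝ)} with hS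
  have hmem : ∀ p : ℕ × ℕ × ℕ, p ∈ S ↔
      2 * p.1 ≤ t ∧ (p.2.1, p.2.2) ∈ {q : ℕ × ℕ | (1/a) * q.1 + (1/b) * q.2 ≤ ((t - 2*p.1 : ℕ):ℝ)} := by
    rintro ⟨x, y, z⟩
    simp only [hS, Set.mem_setOf_eq]
    constructor
    · intro h
      have hyz : (0:ℝ) ≤ (1/a) * y + (1/b) * z := by positivity
      have h2x : 2 * (x:ℝ) ≤ t := by linarith
      have h2x' : 2 * x ≤ t := by exact_mod_cast h2x
      refine ⟨h2x', ?_⟩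
      have : ((t - 2*x : ℕ):ℝ) = (t:ℝ) - 2*x := by
        push_cast [Nat.cast_sub h2x']
        ring
      rw [this]
      linarith
    · rintro ⟨h2x', h⟩
      have : ((t - 2*x : ℕ):ℝ) = (t:ℝ) - 2*x := by
        push_cast [Nat.cast_sub h2x']
        ring
      rw [this] at h
      linarith [h]
  -- embedding
  have hinj : ∀ x : ℕ, Function.Injective (fun q : ℕ × ℕ => (x, q)) := by
    intro x q1 q2 h
    exact congrArg Prod.snd h
  set F : Finset (ℕ × ℕ × ℕ) :=
    (Finset.range (t/2+1)).biUnion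
      (fun x => ((hfin (t - 2*x)).toFinset).map ⟨fun q => (x, q), hinj x⟩) with hF
  have hSF : S = ↑F := by
    ext p
    obtain ⟨x, y, z⟩ := p
    rw [hmem]
    simp only [hF, Finset.coe_biUnion, Finset.mem_coe, Set.mem_iUnion, Finset.mem_map,
      Finset.mem_range, Set.Finite.mem_toFinset, Function.Embedding.coeFn_mk]
    constructor
    · rintro ⟨h2x, h⟩
      refine ⟨x, ?_, ⟨(y, z), h, rfl⟩⟩
      omega
    · rintro ⟨x', hx', ⟨q, hq, heq⟩⟩
      injection heq with h1 h2
      subst h1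
      subst h2
      exact ⟨by omega, hq⟩
  have hcard : ehrhart3 2 (1/a) (1/b) t = F.card := by
    rw [ehrhart3]
    have : {p : ℕ × ℕ × ℕ | 2 * (p.1:ℝ) + (1/a) * p.2.1 + (1/b) * p.2.2 ≤ (t:ℝ)} = ↑F := hSF
    rw [this, Set.ncard_coe_finset]
  rw [hcard]
  have hdisj : ∀ x ∈ Finset.range (t/2+1), ∀ y ∈ Finset.range (t/2+1), x ≠ y →
      Disjoint (((hfin (t - 2*x)).toFinset).map ⟨fun q => (x, q), hinj x⟩)
        (((hfin (t - 2*y)).toFinset).map ⟨fun q => (y, q), hinj y⟩) := by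
    intro x _ y _ hxy
    rw [Finset.disjoint_left]
    rintro p hp hq
    simp only [Finset.mem_map, Function.Embedding.coeFn_mk] at hp hq
    obtain ⟨q1, _, rfl⟩ := hp
    obtain ⟨q2, _, heq⟩ := hq
    exact hxy (congrArg Prod.fst heq).symm
  rw [hF, Finset.card_biUnion hdisj]
  have hterm : ∀ x, (((hfin (t - 2*x)).toFinset).map ⟨fun q => (x, q), hinj x⟩).card
      = (t - 2*x + 1)^2 := by
    intro x
    rw [Finset.card_map]
    have h1 : ((hfin (t - 2*x)).toFinset).card
        = {p : ℕ × ℕ | (1/a) * p.1 + (1/b) * p.2 ≤ ((t - 2*x : ℕ):ℝ)}.ncard :=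
      (Set.ncard_eq_toFinset_card _ (hfin (t - 2*x))).symm
    rw [h1]
    have := htri' (t - 2*x)
    rw [ehrhart2] at this
    exact this
  calc 6 * ∑ x ∈ Finset.range (t/2+1),
        (((hfin (t - 2*x)).toFinset).map ⟨fun q => (x, q), hinj x⟩).card
      = 6 * ∑ x ∈ Finset.range (t/2+1), (t - 2*x + 1)^2 := by
        congr 1
        exact Finset.sum_congr rfl (fun x _ => hterm x)
    _ = t^3 + 6*t^2 + 11*t + 6 := key_sum t
end

section
/- The Ehrhart function of the irrational tetrahedron T with vertices (0,0,0), (1/2,0,0), (0, 2+√2, 0), (0,0, 2−√2) is the polynomial f(t) = t³/6 + t² + 11t/6 + 1: that is, for every positive integer t, #{(x,y,z) ∈ ℤ_{≥0}³ : 2x + (1 − √2/2)y + (1 + √2/2)z ≤ t} = t³/6 + t² + 11t/6 + 1. -/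
namespace Eh19

noncomputable def q : ℝ := Real.sqrt 2 / 2

lemma sqrt2_sq : Real.sqrt 2 * Real.sqrt 2 = 2 := Real.mul_self_sqrt (by norm_num)

lemma sqrt2_lt : Real.sqrt 2 < 2 := by nlinarith [sqrt2_sq, Real.sqrt_nonneg 2]

lemma sqrt2_gt : 1 < Real.sqrt 2 := by nlinarith [sqrt2_sq, Real.sqrt_nonneg 2]

lemma q_pos : 0 < q := by unfold q; nlinarith [sqrt2_gt]
lemma q_lt_one : q < 1 := by unfold q; nlinarith [sqrt2_lt]

noncomputable def h (w : ℤ) : ℤ := |w| + ⌈(w : ℝ) * q⌉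

lemma h_le_iff (w m : ℤ) : h w ≤ m ↔ ((|w| : ℤ) : ℝ) + (w : ℝ) * q ≤ (m : ℝ) := by
  unfold h
  rw [← Int.ceil_le, add_comm ((|w| : ℤ) : ℝ), Int.ceil_add_intCast, add_comm]

lemma h_nonneg (w : ℤ) : 0 ≤ h w := by
  have hr : ((-|w| : ℤ) : ℝ) ≤ (w : ℝ) * q := by
    push_cast
    nlinarith [mul_nonneg (by linarith [neg_abs_le (w : ℝ)] : (0:ℝ) ≤ (w:ℝ) + |(w:ℝ)|) q_pos.le,
      mul_nonneg (abs_nonneg (w : ℝ)) (by linarith [q_lt_one] : (0:ℝ) ≤ 1 - q),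
      abs_nonneg (w : ℝ)]
  have hc : (-|w| : ℤ) ≤ ⌈(w : ℝ) * q⌉ := by
    exact_mod_cast le_trans hr (Int.le_ceil _)
  unfold h
  omega

noncomputable def P (m : ℕ) : ℤ := ⌊(m : ℝ) * (2 - Real.sqrt 2)⌋
noncomputable def Q (m : ℕ) : ℤ := ⌊(m : ℝ) * (2 + Real.sqrt 2)⌋

lemma P_nonneg (m : ℕ) : 0 ≤ P m := by
  apply Int.floor_nonneg.mpr
  have : (0 : ℝ) ≤ (m : ℝ) := by positivity
  nlinarith [sqrt2_lt]

lemma Q_nonneg (m : ℕ) : 0 ≤ Q m := by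
  apply Int.floor_nonneg.mpr
  have : (0 : ℝ) ≤ (m : ℝ) := by positivity
  nlinarith [sqrt2_gt]

lemma hset_eq (m : ℕ) : {w : ℤ | h w ≤ (m : ℤ)} = Set.Icc (-(Q m)) (P m) := by
  have h2m : (0 : ℝ) < 2 - Real.sqrt 2 := by nlinarith [sqrt2_lt]
  have h2p : (0 : ℝ) < 2 + Real.sqrt 2 := by nlinarith [sqrt2_gt]
  have h1q : (0 : ℝ) < 1 + q := by nlinarith [q_pos]
  have h1q' : (0 : ℝ) < 1 - q := by nlinarith [q_lt_one]
  ext w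
  simp only [Set.mem_setOf_eq, Set.mem_Icc, h_le_iff]
  rcases le_or_gt 0 w with hw | hw
  · have habs : ((|w| : ℤ) : ℝ) = (w : ℝ) := by
      push_cast; rw [abs_of_nonneg]; exact_mod_cast hw
    rw [habs]
    have hPiff : ((w : ℝ) + (w : ℝ) * q ≤ (m : ℝ)) ↔ w ≤ P m := by
      unfold P
      rw [Int.le_floor]
      constructor
      · intro hle
        have e : ((w : ℝ) + (w : ℝ) * q) * (2 - Real.sqrt 2) = (w : ℝ) := by
          unfold q; linear_combination (-(w : ℝ) / 2) * sqrt2_sq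
        calc (w : ℝ) = ((w : ℝ) + (w : ℝ) * q) * (2 - Real.sqrt 2) := e.symm
          _ ≤ (m : ℝ) * (2 - Real.sqrt 2) := by
              exact mul_le_mul_of_nonneg_right hle h2m.le
      · intro hle
        have e2 : ((m : ℝ) * (2 - Real.sqrt 2)) * (1 + q) = (m : ℝ) := by
          unfold q; linear_combination (-(m : ℝ) / 2) * sqrt2_sq
        calc (w : ℝ) + (w : ℝ) * q = (w : ℝ) * (1 + q) := by ring
          _ ≤ ((m : ℝ) * (2 - Real.sqrt 2)) * (1 + q) :=
              mul_le_mul_of_nonneg_right hle h1q.le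
          _ = (m : ℝ) := e2
    constructor
    · intro hle
      exact ⟨by have := Q_nonneg m; omega, hPiff.mp hle⟩
    · intro ⟨_, hle⟩
      exact hPiff.mpr hle
  · have habs : ((|w| : ℤ) : ℝ) = -(w : ℝ) := by
      push_cast; rw [abs_of_neg]; exact_mod_cast hw
    rw [habs]
    have hQiff : (-(w : ℝ) + (w : ℝ) * q ≤ (m : ℝ)) ↔ -w ≤ Q m := by
      unfold Q
      rw [Int.le_floor]
      push_cast
      constructor
      · intro hle
        have e : (-(w : ℝ) + (w : ℝ) * q) * (2 + Real.sqrt 2) = -(w : ℝ) := by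
          unfold q; linear_combination ((w : ℝ) / 2) * sqrt2_sq
        calc -(w : ℝ) = (-(w : ℝ) + (w : ℝ) * q) * (2 + Real.sqrt 2) := e.symm
          _ ≤ (m : ℝ) * (2 + Real.sqrt 2) := mul_le_mul_of_nonneg_right hle h2p.le
      · intro hle
        have e2 : ((m : ℝ) * (2 + Real.sqrt 2)) * (1 - q) = (m : ℝ) := by
          unfold q; linear_combination (-(m : ℝ) / 2) * sqrt2_sq
        calc -(w : ℝ) + (w : ℝ) * q = (-(w : ℝ)) * (1 - q) := by ring
          _ ≤ ((m : ℝ) * (2 + Real.sqrt 2)) * (1 - q) :=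
              mul_le_mul_of_nonneg_right hle h1q'.le
          _ = (m : ℝ) := e2
    constructor
    · intro hle
      exact ⟨by have := hQiff.mp hle; omega, by have := P_nonneg m; omega⟩
    · intro ⟨hle, _⟩
      exact hQiff.mpr (by omega)

lemma PQ (m : ℕ) (hm : 1 ≤ m) : P m + Q m = 4 * (m : ℤ) - 1 := by
  have hm0 : (m : ℤ) ≠ 0 := by omega
  have irr2 : Irrational (2 - Real.sqrt 2) := by
    have := irrational_sqrt_two.intCast_sub 2
    simpa using this
  have irr : Irrational ((m : ℝ) * (2 - Real.sqrt 2)) := by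
    have := irr2.intCast_mul (m := (m : ℤ)) hm0
    simpa using this
  have hx1 : ((P m : ℤ) : ℝ) < (m : ℝ) * (2 - Real.sqrt 2) :=
    lt_of_le_of_ne (Int.floor_le _) (fun hh => (irr.ne_int (P m)) hh.symm)
  have hx2 : (m : ℝ) * (2 - Real.sqrt 2) - 1 < ((P m : ℤ) : ℝ) := Int.sub_one_lt_floor _
  have hy1 : ((Q m : ℤ) : ℝ) ≤ (m : ℝ) * (2 + Real.sqrt 2) := Int.floor_le _
  have hy2 : (m : ℝ) * (2 + Real.sqrt 2) - 1 < ((Q m : ℤ) : ℝ) := Int.sub_one_lt_floor _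
  have hsum : (m : ℝ) * (2 - Real.sqrt 2) + (m : ℝ) * (2 + Real.sqrt 2) = 4 * (m : ℝ) := by
    ring
  have hlt : ((P m + Q m : ℤ) : ℝ) < ((4 * (m : ℤ) : ℤ) : ℝ) := by
    push_cast
    linarith
  have hgt : ((4 * (m : ℤ) - 2 : ℤ) : ℝ) < ((P m + Q m : ℤ) : ℝ) := by
    push_cast
    linarith
  have hlt' : P m + Q m < 4 * (m : ℤ) := by exact_mod_cast hlt
  have hgt' : 4 * (m : ℤ) - 2 < P m + Q m := by exact_mod_cast hgt
  omega

lemma card_hset (m : ℕ) (hm : 1 ≤ m) : {w : ℤ | h w ≤ (m : ℤ)}.ncard = 4 * m := by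
  rw [hset_eq, ← Finset.coe_Icc, Set.ncard_coe_finset, Int.card_Icc]
  have h1 := PQ m hm
  have h2 := P_nonneg m
  have h3 := Q_nonneg m
  omega

lemma h_le_zero {w : ℤ} (hw : h w ≤ 0) : w = 0 := by
  have : w ∈ {w : ℤ | h w ≤ ((0 : ℕ) : ℤ)} := by simpa using hw
  rw [hset_eq 0] at this
  simp only [P, Q, Nat.cast_zero, zero_mul, Int.floor_zero, neg_zero, Set.mem_Icc] at this
  omega

def Mset (m : ℕ) : Set (ℕ × ℤ) := {p | 2 * (p.1 : ℤ) + h p.2 ≤ (m : ℤ)}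

def Nset (t : ℕ) : Set (ℕ × ℕ × ℤ) :=
  {p | 2 * (p.1 : ℤ) + 2 * (p.2.1 : ℤ) + h p.2.2 ≤ (t : ℤ)}

lemma Mset_finite (m : ℕ) : (Mset m).Finite := by
  apply Set.Finite.subset ((Set.finite_Iic (m : ℕ)).prod (Set.finite_Icc (-(Q m)) (P m)))
  intro p hp
  simp only [Mset, Set.mem_setOf_eq] at hp
  have h1 := h_nonneg p.2
  constructor
  · simp only [Set.mem_Iic]; omega
  · have : p.2 ∈ {w : ℤ | h w ≤ (m : ℤ)} := by simp only [Set.mem_setOf_eq]; omega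
    rw [hset_eq] at this
    exact this

lemma Nset_finite (t : ℕ) : (Nset t).Finite := by
  apply Set.Finite.subset ((Set.finite_Iic (t : ℕ)).prod
    ((Set.finite_Iic (t : ℕ)).prod (Set.finite_Icc (-(Q t)) (P t))))
  intro p hp
  simp only [Nset, Set.mem_setOf_eq] at hp
  have h1 := h_nonneg p.2.2
  refine ⟨?_, ?_, ?_⟩
  · simp only [Set.mem_Iic]; omega
  · simp only [Set.mem_Iic]; omega
  · have : p.2.2 ∈ {w : ℤ | h w ≤ (t : ℤ)} := by simp only [Set.mem_setOf_eq]; omega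
    rw [hset_eq] at this
    exact this

lemma diffM (m : ℕ) : (Mset (m + 2) \ Mset m).ncard = 4 * (m + 2) := by
  have hinj : Set.InjOn Prod.snd (Mset (m + 2) \ Mset m) := by
    rintro ⟨u, w⟩ ⟨hu1, hu2⟩ ⟨u', w'⟩ ⟨hv1, hv2⟩ hsnd
    simp only [Mset, Set.mem_setOf_eq, Nat.cast_add, Nat.cast_ofNat] at hu1 hu2 hv1 hv2
    simp only at hsnd
    subst hsnd
    have : u = u' := by omega
    subst this
    rfl
  have himg : Prod.snd '' (Mset (m + 2) \ Mset m) = {w : ℤ | h w ≤ ((m + 2 : ℕ) : ℤ)} := by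
    ext w
    constructor
    · rintro ⟨⟨u, w'⟩, ⟨h1, _⟩, rfl⟩
      simp only [Mset, Set.mem_setOf_eq] at h1 ⊢
      omega
    · intro hw
      simp only [Set.mem_setOf_eq] at hw
      refine ⟨⟨(((m : ℤ) + 2 - h w).toNat) / 2, w⟩, ⟨?_, ?_⟩, rfl⟩
      · simp only [Mset, Set.mem_setOf_eq]; push_cast; omega
      · simp only [Mset, Set.mem_setOf_eq]; push_cast; omega
  rw [← Set.ncard_image_of_injOn hinj, himg, card_hset (m + 2) (by omega)]

lemma M_card (m : ℕ) : (Mset m).ncard = (m + 1) ^ 2 := by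
  induction m using Nat.twoStepInduction with
  | zero =>
    have : Mset 0 = {((0 : ℕ), (0 : ℤ))} := by
      ext ⟨u, w⟩
      simp only [Mset, Set.mem_setOf_eq, Set.mem_singleton_iff, Prod.mk.injEq,
        Nat.cast_zero]
      constructor
      · intro hle
        have h1 := h_nonneg w
        have hu : u = 0 := by omega
        have hw : w = 0 := h_le_zero (by omega)
        exact ⟨hu, hw⟩
      · rintro ⟨rfl, rfl⟩
        simp only [Nat.cast_zero, mul_zero, zero_add]
        have : h 0 = 0 := by
          have h1 := h_nonneg (0 : ℤ)
          have h2 : (0 : ℤ) ∈ Set.Icc (-(Q 0)) (P 0) := by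
            simp only [P, Q, Nat.cast_zero, zero_mul, Int.floor_zero, neg_zero,
              Set.mem_Icc]
            omega
          -- h 0 ≤ 0 : directly
          have : h 0 ≤ 0 := by
            rw [h_le_iff]
            norm_num
          omega
        omega
    rw [this, Set.ncard_singleton]
    norm_num
  | one =>
    have himg : Mset 1 = (fun w : ℤ => ((0 : ℕ), w)) '' {w : ℤ | h w ≤ ((1 : ℕ) : ℤ)} := by
      ext ⟨u, w⟩
      simp only [Mset, Set.mem_setOf_eq, Set.mem_image, Prod.mk.injEq]
      constructor
      · intro hle
        have h1 := h_nonneg w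
        have hu : u = 0 := by omega
        exact ⟨w, by omega, hu.symm, rfl⟩
      · rintro ⟨w', hw', rfl, rfl⟩
        push_cast
        omega
    rw [himg, Set.ncard_image_of_injective _ (by intro a b hab; simpa using hab),
      card_hset 1 (by omega)]
    norm_num
  | more n ih _ =>
    have hsub : Mset n ⊆ Mset (n + 2) := by
      intro p hp
      simp only [Mset, Set.mem_setOf_eq] at hp ⊢
      push_cast
      push_cast at hp
      omega
    have hkey := Set.ncard_diff_add_ncard_of_subset hsub (Mset_finite (n + 2))
    rw [diffM n, ih] at hkey
    have : (n + 2 + 1) ^ 2 = 4 * (n + 2) + (n + 1) ^ 2 := by ring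
    omega

lemma diffN (t : ℕ) : (Nset (t + 2) \ Nset t).ncard = (t + 3) ^ 2 := by
  have hinj : Set.InjOn Prod.snd (Nset (t + 2) \ Nset t) := by
    rintro ⟨x, u, w⟩ ⟨h1, h2⟩ ⟨x', u', w'⟩ ⟨h3, h4⟩ hsnd
    simp only [Nset, Set.mem_setOf_eq] at h1 h2 h3 h4
    simp only at hsnd
    have h5 : u = u' := congrArg Prod.fst hsnd
    have h6 : w = w' := congrArg Prod.snd hsnd
    subst h5; subst h6
    have : x = x' := by omega
    subst this
    rfl
  have himg : Prod.snd '' (Nset (t + 2) \ Nset t) = Mset (t + 2) := by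
    ext ⟨u, w⟩
    constructor
    · rintro ⟨⟨x, u', w'⟩, ⟨h1, _⟩, heq⟩
      simp only at heq
      cases heq
      simp only [Nset, Set.mem_setOf_eq] at h1
      simp only [Mset, Set.mem_setOf_eq]
      push_cast at h1 ⊢
      omega
    · intro hp
      simp only [Mset, Set.mem_setOf_eq] at hp
      refine ⟨⟨(((t : ℤ) + 2 - (2 * (u : ℤ) + h w)).toNat) / 2, u, w⟩, ⟨?_, ?_⟩, rfl⟩
      · simp only [Nset, Set.mem_setOf_eq]; push_cast at hp ⊢; omega
      · simp only [Nset, Set.mem_setOf_eq]; push_cast at hp ⊢; omega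
  rw [← Set.ncard_image_of_injOn hinj, himg, M_card (t + 2)]

lemma N_card (t : ℕ) : 6 * (Nset t).ncard = (t + 1) * (t + 2) * (t + 3) := by
  induction t using Nat.twoStepInduction with
  | zero =>
    have : Nset 0 = {((0 : ℕ), (0 : ℕ), (0 : ℤ))} := by
      ext ⟨x, u, w⟩
      simp only [Nset, Set.mem_setOf_eq, Set.mem_singleton_iff, Prod.mk.injEq,
        Nat.cast_zero]
      constructor
      · intro hle
        have h1 := h_nonneg w
        have hw : w = 0 := h_le_zero (by omega)
        refine ⟨by omega, by omega, hw⟩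
      · rintro ⟨rfl, rfl, rfl⟩
        have : h 0 ≤ 0 := by rw [h_le_iff]; norm_num
        push_cast
        omega
    rw [this, Set.ncard_singleton]
  | one =>
    have himg : Nset 1 = (fun p : ℕ × ℤ => ((0 : ℕ), p)) '' Mset 1 := by
      ext ⟨x, u, w⟩
      simp only [Nset, Mset, Set.mem_setOf_eq, Set.mem_image, Prod.mk.injEq]
      constructor
      · intro hle
        have h1 := h_nonneg w
        have hx : x = 0 := by push_cast at hle; omega
        exact ⟨(u, w), by push_cast at hle ⊢; omega, hx.symm, rfl⟩
      · rintro ⟨⟨u', w'⟩, hp, rfl, hq⟩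
        cases hq
        push_cast at hp ⊢
        omega
    rw [himg, Set.ncard_image_of_injective _ (by intro a b hab; simpa using hab),
      M_card 1]
    norm_num
  | more n ih _ =>
    have hsub : Nset n ⊆ Nset (n + 2) := by
      intro p hp
      simp only [Nset, Set.mem_setOf_eq] at hp ⊢
      push_cast at hp ⊢
      omega
    have hkey := Set.ncard_diff_add_ncard_of_subset hsub (Nset_finite (n + 2))
    rw [diffN n] at hkey
    have h1 : (Nset (n + 2)).ncard = (n + 3) ^ 2 + (Nset n).ncard := by omega
    rw [h1]
    have h2 : (n + 2 + 1) * (n + 2 + 2) * (n + 2 + 3)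
        = 6 * (n + 3) ^ 2 + (n + 1) * (n + 2) * (n + 3) := by ring
    omega

def e2 : ℕ × ℕ ≃ ℕ × ℤ where
  toFun p := (min p.1 p.2, (p.2 : ℤ) - (p.1 : ℤ))
  invFun p := (p.1 + (-p.2).toNat, p.1 + p.2.toNat)
  left_inv := by
    rintro ⟨y, z⟩
    simp only
    ext
    · simp only; omega
    · simp only; omega
  right_inv := by
    rintro ⟨u, w⟩
    simp only
    ext
    · simp only; omega
    · simp only; push_cast; omega

def E3 : (ℕ × ℕ × ℕ) ≃ (ℕ × ℕ × ℤ) := (Equiv.refl ℕ).prodCongr e2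

lemma cond_iff (t x y z : ℕ) :
    2 * (x : ℝ) + (1 - Real.sqrt 2 / 2) * (y : ℝ) + (1 + Real.sqrt 2 / 2) * (z : ℝ) ≤ (t : ℝ)
      ↔ 2 * (x : ℤ) + 2 * ((min y z : ℕ) : ℤ) + h ((z : ℤ) - (y : ℤ)) ≤ (t : ℤ) := by
  set w : ℤ := (z : ℤ) - (y : ℤ) with hw
  set n : ℤ := 2 * (x : ℤ) + 2 * ((min y z : ℕ) : ℤ) + |w| with hn
  have hyz : 2 * ((min y z : ℕ) : ℤ) + |w| = (y : ℤ) + (z : ℤ) := by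
    rw [hw, Int.abs_eq_natAbs]
    omega
  have hsum : n + ⌈(w : ℝ) * q⌉ = 2 * (x : ℤ) + 2 * ((min y z : ℕ) : ℤ) + h w := by
    rw [hn]
    unfold h
    ring
  have hlhs : 2 * (x : ℝ) + (1 - Real.sqrt 2 / 2) * (y : ℝ) + (1 + Real.sqrt 2 / 2) * (z : ℝ)
      = (n : ℝ) + (w : ℝ) * q := by
    have hnr : (n : ℝ) = 2 * (x : ℝ) + (y : ℝ) + (z : ℝ) := by
      have h2 : ((2 * ((min y z : ℕ) : ℤ) + |w| : ℤ) : ℝ) = (y : ℝ) + (z : ℝ) := by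
        rw [hyz]; push_cast; ring
      rw [hn]
      push_cast at h2 ⊢
      linarith
    have hwr : (w : ℝ) = (z : ℝ) - (y : ℝ) := by rw [hw]; push_cast; ring
    rw [hnr, hwr]
    unfold q
    ring
  rw [hlhs, ← hsum]
  constructor
  · intro hle
    have hc : ⌈(w : ℝ) * q + (n : ℤ)⌉ ≤ (t : ℤ) := Int.ceil_le.mpr (by push_cast; linarith)
    rw [Int.ceil_add_intCast] at hc
    omega
  · intro hle
    have hle' : ⌈(w : ℝ) * q⌉ + n ≤ (t : ℤ) := by omega
    have hc : ((⌈(w : ℝ) * q⌉ + n : ℤ) : ℝ) ≤ ((t : ℤ) : ℝ) := by exact_mod_cast hle'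
    push_cast at hc
    have := Int.le_ceil ((w : ℝ) * q)
    linarith

end Eh19

/-- The Ehrhart function of the irrational tetrahedron with vertices
`(0,0,0),(1/2,0,0),(0,2+√2,0),(0,0,2−√2)` is `t³/6 + t² + 11t/6 + 1`. -/
theorem stmt_19 (t : ℕ) (ht : 0 < t) :
    6 * ehrhart3 2 (1 - Real.sqrt 2 / 2) (1 + Real.sqrt 2 / 2) t =
      t ^ 3 + 6 * t ^ 2 + 11 * t + 6 := by
  unfold ehrhart3
  have hset : {p : ℕ × ℕ × ℕ | 2 * (p.1 : ℝ) + (1 - Real.sqrt 2 / 2) * (p.2.1 : ℝ)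
      + (1 + Real.sqrt 2 / 2) * (p.2.2 : ℝ) ≤ (t : ℝ)}
      = Eh19.E3 ⁻¹' (Eh19.Nset t) := by
    ext ⟨x, y, z⟩
    simp only [Set.mem_setOf_eq, Set.mem_preimage, Eh19.E3, Eh19.e2, Eh19.Nset,
      Equiv.prodCongr_apply, Equiv.coe_refl, Prod.map, id_eq, Equiv.coe_fn_mk]
    exact Eh19.cond_iff t x y z
  rw [hset]
  have hpre : Eh19.E3 ⁻¹' (Eh19.Nset t) = Eh19.E3.symm '' (Eh19.Nset t) := by
    rw [Equiv.image_eq_preimage_symm]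
    simp
  rw [hpre, Set.ncard_image_of_injective _ Eh19.E3.symm.injective, Eh19.N_card]
  ring
end
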